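/- arXiv:1109.0634 — 3 statements merged into one kernel-verified Lean document; each statement's English description precedes it below -/
import Mathlib

section
/- Let L be a set of m distinct straight lines in ℝ³ and let J₀ be a finite set of points each of which lies on at least two lines of L. Suppose that for some real C ≥ 1 the set J₀ is proper 3-dimensional up to the constant factor C, i.e., there is a set H of at most C·|J₀|^{1/3} planes such that no point of J₀ lies on any plane of H and any two distinct points of J₀ are strictly separated by some plane of H. Then |J₀| ≤ C^{3/2}·m^{3/2}. -/
open scoped BigOperators

/-- A straight line in `ℝ^d`, given as the set of points on an affine line. -/
def IsLine {d : ℕ} (l : Set (Fin d → ℝ)) : Prop :=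
  ∃ p v : Fin d → ℝ, v ≠ 0 ∧ l = {x | ∃ t : ℝ, x = p + t • v}

/-- The signed value of a point `x` with respect to the plane `{y | ∑ i, h.1 i * y i = h.2}`
in `ℝ³`, represented by its normal vector `h.1` and offset `h.2`. -/
def pval (h : (Fin 3 → ℝ) × ℝ) (x : Fin 3 → ℝ) : ℝ :=
  (∑ i, h.1 i * x i) - h.2

/-- A finite set `P ⊂ ℝ³` is proper 3-dimensional up to the constant factor `C ≥ 1` if
there is a set `H` of at most `C * |P|^(1/3)` planes such that no point of `P` lies on any
plane of `H` and any two distinct points of `P` are strictly separated by some plane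
of `H`. -/
def Proper3D (C : ℝ) (P : Set (Fin 3 → ℝ)) : Prop :=
  ∃ H : Finset ((Fin 3 → ℝ) × ℝ),
    (∀ h ∈ H, h.1 ≠ 0) ∧
    (H.card : ℝ) ≤ C * (P.ncard : ℝ) ^ ((1 : ℝ) / 3) ∧
    (∀ p ∈ P, ∀ h ∈ H, pval h p ≠ 0) ∧
    (∀ p ∈ P, ∀ q ∈ P, p ≠ q → ∃ h ∈ H, pval h p * pval h q < 0)

open Classical in
lemma pval_line (h : (Fin 3 → ℝ) × ℝ) (p v : Fin 3 → ℝ) (t : ℝ) :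
    pval h (p + t • v) = pval h p + t * ∑ i, h.1 i * v i := by
  simp only [pval, Pi.add_apply, Pi.smul_apply, smul_eq_mul, mul_add,
    Finset.sum_add_distrib, Finset.mul_sum]
  ring_nf
  congr 1
  rw [Finset.sum_congr rfl (fun i _ => show h.1 i * t * v i = t * h.1 i * v i by ring)]
  ring

open Classical in
lemma line_card (H : Finset ((Fin 3 → ℝ) × ℝ)) (J : Finset (Fin 3 → ℝ))
    (p v : Fin 3 → ℝ)
    (hsep : ∀ x ∈ J, ∀ y ∈ J, x ≠ y → ∃ h ∈ H, pval h x * pval h y < 0) :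
    (J.filter (fun x => x ∈ {x : Fin 3 → ℝ | ∃ t : ℝ, x = p + t • v})).card
      ≤ H.card + 1 := by
  classical
  set φ : (Fin 3 → ℝ) → ℕ :=
    fun x => (H.filter (fun h => 0 < pval h x * ∑ i, h.1 i * v i)).card with hφ
  have hmono : ∀ t₁ t₂ : ℝ, t₁ ≤ t₂ →
      H.filter (fun h => 0 < pval h (p + t₁ • v) * ∑ i, h.1 i * v i) ⊆
      H.filter (fun h => 0 < pval h (p + t₂ • v) * ∑ i, h.1 i * v i) := by
    intro t₁ t₂ hle h hh
    simp only [Finset.mem_filter, pval_line] at hh ⊢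
    refine ⟨hh.1, ?_⟩
    have h1 := hh.2
    nlinarith [sq_nonneg (∑ i, h.1 i * v i), mul_nonneg (sub_nonneg.2 hle) (sq_nonneg (∑ i, h.1 i * v i))]
  have hstrict : ∀ x ∈ J, ∀ y ∈ J, ∀ t₁ t₂ : ℝ, x = p + t₁ • v → y = p + t₂ • v →
      t₁ < t₂ → x ≠ y → φ x < φ y := by
    intro x hx y hy t₁ t₂ hxt hyt hlt hne
    obtain ⟨h₀, hh₀, hsep₀⟩ := hsep x hx y hy hne
    apply Finset.card_lt_card
    constructor
    · rw [hxt, hyt]; exact hmono t₁ t₂ hlt.le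
    · intro hsub
      have h₀y : h₀ ∈ H.filter (fun h => 0 < pval h y * ∑ i, h.1 i * v i) := by
        simp only [Finset.mem_filter]
        refine ⟨hh₀, ?_⟩
        rw [hyt, pval_line]
        rw [hxt, hyt, pval_line, pval_line] at hsep₀
        set a := pval h₀ p
        set b := ∑ i, h₀.1 i * v i
        -- (a+t₁b)(a+t₂b)<0, t₁<t₂ ⊢ 0 < (a+t₂b)*b
        rcases lt_trichotomy ((a + t₂ * b) * b) 0 with hc | hc | hc
        · exfalso
          have h1 : (a + t₁ * b) * b < 0 := by
            nlinarith [sq_nonneg b, mul_nonneg (sub_nonneg.2 hlt.le) (sq_nonneg b)]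
          nlinarith [sq_nonneg b]
        · exfalso
          have hb : b ≠ 0 := by
            intro hb0; rw [hb0] at hsep₀; nlinarith [sq_nonneg a]
          rcases mul_eq_zero.1 hc with h1 | h1
          · nlinarith
          · exact hb h1
        · exact hc
      have h₀x : h₀ ∈ H.filter (fun h => 0 < pval h x * ∑ i, h.1 i * v i) :=
        hsub h₀y
      simp only [Finset.mem_filter] at h₀x h₀y
      nlinarith [h₀x.2, h₀y.2, hsep₀, sq_nonneg (∑ i, h₀.1 i * v i)]
  rw [← Finset.card_range (H.card + 1)]
  apply Finset.card_le_card_of_injOn (fun x => φ x) (t := Finset.range (H.card + 1))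
  · intro x hx
    simp only [Finset.coe_range, Set.mem_Iio, Finset.mem_range, Nat.lt_succ_iff, hφ]
    apply Finset.card_filter_le
  · intro x hx y hy hxy
    simp only [Finset.coe_filter, Set.mem_setOf_eq] at hx hy
    obtain ⟨hxJ, t₁, hxt⟩ := hx
    obtain ⟨hyJ, t₂, hyt⟩ := hy
    by_contra hne
    rcases lt_trichotomy t₁ t₂ with h | h | h
    · exact absurd hxy (Nat.ne_of_lt (hstrict x hxJ y hyJ t₁ t₂ hxt hyt h hne))
    · exact hne (by rw [hxt, hyt, h])
    · exact absurd hxy.symm (Nat.ne_of_lt (hstrict y hyJ x hxJ t₂ t₁ hyt hxt h (Ne.symm hne)))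

/-- **Sharir's joints bound for proper 3-dimensional sets.** Let `L` be a set of `m`
distinct lines in `ℝ³` and let `J₀` be a finite set of points, each lying on at least two
lines of `L`. If `J₀` is proper 3-dimensional up to a constant factor `C ≥ 1`, then
`|J₀| ≤ C^(3/2) * m^(3/2)`. -/
theorem joints_proper_3d (C : ℝ) (hC : 1 ≤ C)
    (L : Finset (Set (Fin 3 → ℝ))) (m : ℕ) (hm : L.card = m)
    (hL : ∀ l ∈ L, IsLine l)
    (J₀ : Finset (Fin 3 → ℝ))
    (hJ : ∀ p ∈ J₀, 2 ≤ Set.ncard {l : Set (Fin 3 → ℝ) | l ∈ L ∧ p ∈ l})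
    (hproper : Proper3D C (J₀ : Set (Fin 3 → ℝ))) :
    (J₀.card : ℝ) ≤ C ^ ((3 : ℝ) / 2) * (m : ℝ) ^ ((3 : ℝ) / 2) := by
  classical
  obtain ⟨H, -, hHcard, -, hsep'⟩ := hproper
  have hsep : ∀ x ∈ J₀, ∀ y ∈ J₀, x ≠ y → ∃ h ∈ H, pval h x * pval h y < 0 := by
    intro x hx y hy hne
    exact hsep' x (by exact_mod_cast hx) y (by exact_mod_cast hy) hne
  -- per-line bound
  have hline : ∀ l ∈ L, (J₀.filter (fun x => x ∈ l)).card ≤ H.card + 1 := by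
    intro l hl
    obtain ⟨p, v, -, rfl⟩ := hL l hl
    exact line_card H J₀ p v hsep
  -- double counting
  have hswap : ∑ l ∈ L, (J₀.filter (fun x => x ∈ l)).card
      = ∑ x ∈ J₀, (L.filter (fun l => x ∈ l)).card := by
    simp only [Finset.card_filter]
    rw [Finset.sum_comm]
  have hlow : 2 * J₀.card ≤ ∑ l ∈ L, (J₀.filter (fun x => x ∈ l)).card := by
    rw [hswap]
    calc 2 * J₀.card = ∑ _x ∈ J₀, 2 := by rw [Finset.sum_const, smul_eq_mul, mul_comm]
    _ ≤ _ := by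
      apply Finset.sum_le_sum
      intro x hx
      have := hJ x hx
      have heq : {l : Set (Fin 3 → ℝ) | l ∈ L ∧ x ∈ l}
          = ↑(L.filter (fun l => x ∈ l)) := by
        ext l; simp
      rw [heq, Set.ncard_coe_finset] at this
      exact this
  have hup : ∑ l ∈ L, (J₀.filter (fun x => x ∈ l)).card ≤ m * (H.card + 1) := by
    calc ∑ l ∈ L, (J₀.filter (fun x => x ∈ l)).card
        ≤ ∑ _l ∈ L, (H.card + 1) := Finset.sum_le_sum hline
    _ = m * (H.card + 1) := by rw [Finset.sum_const, smul_eq_mul, hm]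
  have hmain : 2 * (J₀.card : ℝ) ≤ (m : ℝ) * ((H.card : ℝ) + 1) := by
    exact_mod_cast hlow.trans hup
  -- arithmetic
  set N : ℝ := (J₀.card : ℝ) with hN
  rcases Nat.eq_zero_or_pos J₀.card with h0 | h0
  · rw [hN, h0]
    push_cast
    positivity
  have hN1 : (1 : ℝ) ≤ N := by rw [hN]; exact_mod_cast h0
  have hNpos : (0 : ℝ) < N := lt_of_lt_of_le one_pos hN1
  have hNcube : (1 : ℝ) ≤ N ^ ((1:ℝ)/3) := by
    calc (1:ℝ) = 1 ^ ((1:ℝ)/3) := (Real.one_rpow _).symm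
    _ ≤ N ^ ((1:ℝ)/3) := Real.rpow_le_rpow one_pos.le hN1 (by norm_num)
  have hCN1 : (1 : ℝ) ≤ C * N ^ ((1:ℝ)/3) := by nlinarith
  have hHcard' : (H.card : ℝ) ≤ C * N ^ ((1:ℝ)/3) := by
    rwa [Set.ncard_coe_finset] at hHcard
  have hstep : N ≤ C * m * N ^ ((1:ℝ)/3) := by
    have hm0 : (0:ℝ) ≤ (m:ℝ) := Nat.cast_nonneg m
    nlinarith [hmain, hHcard', hCN1]
  have h23 : N ^ ((2:ℝ)/3) ≤ C * m := by
    have hx : N ^ ((2:ℝ)/3) * N ^ ((1:ℝ)/3) = N := by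
      rw [← Real.rpow_add hNpos]; norm_num
    have hu : (0:ℝ) < N ^ ((1:ℝ)/3) := Real.rpow_pos_of_pos hNpos _
    rw [← mul_le_mul_iff_of_pos_right hu, hx]
    calc N ≤ C * m * N ^ ((1:ℝ)/3) := hstep
    _ = C * ↑m * N ^ ((1:ℝ)/3) := rfl
  calc N = (N ^ ((2:ℝ)/3)) ^ ((3:ℝ)/2) := by
        rw [← Real.rpow_mul hNpos.le]
        norm_num
  _ ≤ (C * m) ^ ((3:ℝ)/2) := Real.rpow_le_rpow (Real.rpow_nonneg hNpos.le _) h23 (by norm_num)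
  _ = C ^ ((3:ℝ)/2) * (m:ℝ) ^ ((3:ℝ)/2) :=
      Real.mul_rpow (le_trans zero_le_one hC) (Nat.cast_nonneg m)
end

section
/- There is an absolute constant c > 0 such that for every integer n ≥ 2 and every integer k with 2 ≤ k ≤ n, the number of k-rich lines with respect to the cube lattice P = {1, 2, …, n}³ ⊂ ℝ³ is at least c·n⁶/k⁴ (that is, at least c·N²/k⁴ where N = n³ = |P|). -/
open Finset

/-- The cube lattice `{1, 2, …, n}^d ⊂ ℝ^d`. -/
def cubeLattice (d n : ℕ) : Set (Fin d → ℝ) :=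
  {x | ∀ i, ∃ m : ℕ, 1 ≤ m ∧ m ≤ n ∧ x i = m}

noncomputable section Aux

def lineThrough (p v : Fin 3 → ℝ) : Set (Fin 3 → ℝ) := {x | ∃ t : ℝ, x = p + t • v}

def vec (a b c : ℝ) : Fin 3 → ℝ := fun i => if i = 0 then a else if i = 1 then b else c

@[simp] lemma vec0 (a b c : ℝ) : vec a b c 0 = a := rfl
@[simp] lemma vec1 (a b c : ℝ) : vec a b c 1 = b := rfl
@[simp] lemma vec2 (a b c : ℝ) : vec a b c 2 = c := rfl

def lmap (a b c x y z : ℕ) : Set (Fin 3 → ℝ) := lineThrough (vec x y z) (vec a b c)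

def Φ (p : (ℕ × ℕ) × ℕ × ℕ × ℕ × ℕ) : Set (Fin 3 → ℝ) :=
  lmap p.1.1 p.1.2 p.2.1 p.2.2.1 p.2.2.2.1 p.2.2.2.2

def RichSet (n k : ℕ) : Set (Set (Fin 3 → ℝ)) :=
  {l : Set (Fin 3 → ℝ) | IsLine l ∧ k ≤ Set.ncard (cubeLattice 3 n ∩ l)}

lemma latticeFinite (d n : ℕ) : (cubeLattice d n).Finite := by
  have hsub : cubeLattice d n ⊆ Set.pi Set.univ (fun _ : Fin d => (Nat.cast : ℕ → ℝ) '' (Set.Icc 1 n)) := by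
    intro x hx i _
    obtain ⟨m, h1, h2, h3⟩ := hx i
    exact ⟨m, ⟨h1, h2⟩, h3.symm⟩
  exact (Set.Finite.pi (fun _ => (Set.finite_Icc 1 n).image _)).subset hsub

lemma line_eq {l : Set (Fin 3 → ℝ)} (hl : IsLine l) {p q : Fin 3 → ℝ}
    (hp : p ∈ l) (hq : q ∈ l) (hne : p ≠ q) : l = lineThrough p (q - p) := by
  obtain ⟨P, V, hV, rfl⟩ := hl
  obtain ⟨t1, hp⟩ := hp
  obtain ⟨t2, hq⟩ := hq
  have hd : t2 - t1 ≠ 0 := by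
    intro h0
    apply hne
    have : t1 = t2 := by linarith [sub_eq_zero.mp h0]
    rw [hp, hq, this]
  have hqp : q - p = (t2 - t1) • V := by rw [hp, hq]; module
  ext w
  constructor
  · rintro ⟨u, rfl⟩
    refine ⟨(u - t1)/(t2 - t1), ?_⟩
    rw [hqp, hp, smul_smul, div_mul_cancel₀ _ hd]
    module
  · rintro ⟨s, rfl⟩
    refine ⟨t1 + s * (t2 - t1), ?_⟩
    rw [hqp, hp]
    module

lemma richFinite (n k : ℕ) (hk : 2 ≤ k) : (RichSet n k).Finite := by
  have hfin : ((cubeLattice 3 n) ×ˢ (cubeLattice 3 n)).Finite :=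
    (latticeFinite 3 n).prod (latticeFinite 3 n)
  refine (hfin.image (fun pq : (Fin 3 → ℝ) × (Fin 3 → ℝ) => lineThrough pq.1 (pq.2 - pq.1))).subset ?_
  rintro l ⟨hl, hcard⟩
  have hfin2 : (cubeLattice 3 n ∩ l).Finite := (latticeFinite 3 n).inter_of_left _
  have h2 : 1 < (cubeLattice 3 n ∩ l).ncard := lt_of_lt_of_le (by omega) hcard
  obtain ⟨p, hp, q, hq, hne⟩ := (Set.one_lt_ncard hfin2).mp h2
  exact ⟨(p, q), ⟨hp.1, hq.1⟩, (line_eq hl hp.2 hq.2 hne).symm⟩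

lemma rich_lemma {n k a b c x y z : ℕ} (ha : 1 ≤ a) (hx : 1 ≤ x) (hy : 1 ≤ y) (hz : 1 ≤ z)
    (hk : 1 ≤ k)
    (hxn : x + (k-1)*a ≤ n) (hyn : y + (k-1)*b ≤ n) (hzn : z + (k-1)*c ≤ n) :
    k ≤ Set.ncard (cubeLattice 3 n ∩ lmap a b c x y z) := by
  classical
  set f : ℕ → (Fin 3 → ℝ) :=
    fun j => vec ((x + j*a : ℕ) : ℝ) ((y + j*b : ℕ) : ℝ) ((z + j*c : ℕ) : ℝ) with hf
  have hinj : Set.InjOn f (Finset.range k) := by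
    intro j hj j' hj' hee
    have h0 : ((x + j*a : ℕ) : ℝ) = ((x + j'*a : ℕ) : ℝ) := congrFun hee 0
    have : x + j*a = x + j'*a := by exact_mod_cast h0
    have : j*a = j'*a := by omega
    exact Nat.eq_of_mul_eq_mul_right ha this
  have hsub : ↑((Finset.range k).image f) ⊆ cubeLattice 3 n ∩ lmap a b c x y z := by
    intro w hw
    simp only [Finset.coe_image, Set.mem_image, Finset.mem_coe, Finset.mem_range] at hw
    obtain ⟨j, hj, rfl⟩ := hw
    have hj' : j ≤ k - 1 := by omega
    constructor
    · intro i
      fin_cases i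
      · exact ⟨x + j*a, by omega, by
          calc x + j*a ≤ x + (k-1)*a := by
                have := Nat.mul_le_mul_right a hj'; omega
            _ ≤ n := hxn, rfl⟩
      · exact ⟨y + j*b, by omega, by
          calc y + j*b ≤ y + (k-1)*b := by
                have := Nat.mul_le_mul_right b hj'; omega
            _ ≤ n := hyn, rfl⟩
      · exact ⟨z + j*c, by omega, by
          calc z + j*c ≤ z + (k-1)*c := by
                have := Nat.mul_le_mul_right c hj'; omega
            _ ≤ n := hzn, rfl⟩
    · refine ⟨(j : ℝ), ?_⟩
      funext i
      fin_cases i <;>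
        simp [hf, vec, Pi.add_apply, Pi.smul_apply, smul_eq_mul] <;> push_cast <;> ring
  have hfin : (cubeLattice 3 n ∩ lmap a b c x y z).Finite :=
    (latticeFinite 3 n).inter_of_left _
  calc k = ((Finset.range k).image f).card := by
        rw [Finset.card_image_of_injOn (by simpa using hinj), Finset.card_range]
    _ = (↑((Finset.range k).image f) : Set (Fin 3 → ℝ)).ncard := (Set.ncard_coe_finset _).symm
    _ ≤ Set.ncard (cubeLattice 3 n ∩ lmap a b c x y z) := Set.ncard_le_ncard hsub hfin

lemma inj_lemma {a b c x y z a' b' c' x' y' z' : ℕ}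
    (ha : 1 ≤ a) (hx1 : 1 ≤ x) (hxa : x ≤ a) (hab : Nat.gcd a b = 1)
    (ha' : 1 ≤ a') (hx1' : 1 ≤ x') (hxa' : x' ≤ a') (hab' : Nat.gcd a' b' = 1)
    (h : lmap a b c x y z = lmap a' b' c' x' y' z') :
    a = a' ∧ b = b' ∧ c = c' ∧ x = x' ∧ y = y' ∧ z = z' := by
  have hP' : vec (x':ℝ) y' z' ∈ lmap a b c x y z := by
    rw [h]; exact ⟨0, by simp⟩
  have hPV' : vec (x':ℝ) y' z' + vec (a':ℝ) b' c' ∈ lmap a b c x y z := by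
    rw [h]; exact ⟨1, by simp⟩
  obtain ⟨t, ht⟩ := hP'
  obtain ⟨s, hs⟩ := hPV'
  have hVeq : vec (a':ℝ) b' c' = (s - t) • vec (a:ℝ) b c := by
    rw [ht] at hs
    have : vec (x:ℝ) y z + t • vec (a:ℝ) b c + vec (a':ℝ) b' c'
        = vec (x:ℝ) y z + s • vec (a:ℝ) b c := hs
    have h2 := congrArg (fun w => w - (vec (x:ℝ) y z + t • vec (a:ℝ) b c)) this
    simpa [sub_smul] using h2
  set r : ℝ := s - t with hr
  have hA : (a':ℝ) = r * a := by simpa using congrFun hVeq 0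
  have hB : (b':ℝ) = r * b := by simpa using congrFun hVeq 1
  have hC : (c':ℝ) = r * c := by simpa using congrFun hVeq 2
  have hcross : (a:ℝ) * b' = a' * b := by rw [hA, hB]; ring
  have hcrossN : a * b' = a' * b := by exact_mod_cast hcross
  have hdvd1 : a ∣ a' := by
    refine (Nat.Coprime.dvd_of_dvd_mul_right hab ?_)
    exact ⟨b', hcrossN.symm⟩
  have hdvd2 : a' ∣ a := by
    refine (Nat.Coprime.dvd_of_dvd_mul_right hab' ?_)
    exact ⟨b, hcrossN⟩
  have haa : a = a' := Nat.dvd_antisymm hdvd1 hdvd2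
  have haR : (a:ℝ) ≠ 0 := by positivity
  have hr1 : r = 1 := by
    have : r * a = 1 * a := by rw [← hA, haa, one_mul]
    exact mul_right_cancel₀ haR this
  have hbb : b = b' := by
    have : (b':ℝ) = b := by rw [hB, hr1, one_mul]
    exact_mod_cast this.symm
  have hcc : c = c' := by
    have : (c':ℝ) = c := by rw [hC, hr1, one_mul]
    exact_mod_cast this.symm
  -- now the base point
  have hX : (x':ℝ) = x + t * a := by simpa using congrFun ht 0
  have hY : (y':ℝ) = y + t * b := by simpa using congrFun ht 1
  have hZ : (z':ℝ) = z + t * c := by simpa using congrFun ht 2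
  obtain ⟨u, v, huv⟩ : IsCoprime (a:ℤ) (b:ℤ) := Nat.isCoprime_iff_coprime.mpr hab
  set e : ℤ := u * ((x':ℤ) - x) + v * ((y':ℤ) - y) with he
  have het : (e:ℝ) = t := by
    have huvR : (u:ℝ) * a + v * b = 1 := by exact_mod_cast congrArg (fun m : ℤ => (m:ℝ)) huv
    have : (e:ℝ) = (u:ℝ) * ((x':ℝ) - x) + (v:ℝ) * ((y':ℝ) - y) := by push_cast [he]; ring
    rw [this, hX, hY]
    calc (u:ℝ) * ((x:ℝ) + t*a - x) + (v:ℝ) * ((y:ℝ) + t*b - y)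
        = t * ((u:ℝ) * a + v * b) := by ring
      _ = t := by rw [huvR]; ring
  have hxe : (x':ℤ) - x = e * a := by
    have : ((x':ℤ) - x : ℝ) = (e * a : ℤ) := by push_cast; rw [hX, het]; ring
    exact_mod_cast this
  have hb1 : (x':ℤ) - x ≤ (a:ℤ) - 1 := by omega
  have hb2 : -((a:ℤ) - 1) ≤ (x':ℤ) - x := by omega
  have he0 : e = 0 := by
    rcases lt_trichotomy e 0 with hlt | h0 | hgt
    · exfalso
      have : e ≤ -1 := by omega
      nlinarith [hxe, hb2, (by exact_mod_cast ha : (1:ℤ) ≤ a)]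
    · exact h0
    · exfalso
      have : 1 ≤ e := by omega
      nlinarith [hxe, hb1, (by exact_mod_cast ha : (1:ℤ) ≤ a)]
  have ht0 : t = 0 := by rw [← het, he0]; simp
  have hxx : x = x' := by
    have : (x':ℝ) = x := by rw [hX, ht0]; ring
    exact_mod_cast this.symm
  have hyy : y = y' := by
    have : (y':ℝ) = y := by rw [hY, ht0]; ring
    exact_mod_cast this.symm
  have hzz : z = z' := by
    have : (z':ℝ) = z := by rw [hZ, ht0]; ring
    exact_mod_cast this.symm
  exact ⟨haa, hbb, hcc, hxx, hyy, hzz⟩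

lemma card_le_ncard_rich {n k : ℕ} (hk : 2 ≤ k) (F : Finset ((ℕ × ℕ) × ℕ × ℕ × ℕ × ℕ))
    (hmem : ∀ p ∈ F, Φ p ∈ RichSet n k) (hinj : Set.InjOn Φ F) :
    (F.card : ℝ) ≤ ((RichSet n k).ncard : ℝ) := by
  classical
  have h1 : (F.image Φ).card = F.card := Finset.card_image_of_injOn hinj
  have h2 : (↑(F.image Φ) : Set (Set (Fin 3 → ℝ))) ⊆ RichSet n k := by
    intro l hl
    simp only [Finset.coe_image, Set.mem_image, Finset.mem_coe] at hl
    obtain ⟨p, hp, rfl⟩ := hl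
    exact hmem p hp
  have h3 := Set.ncard_le_ncard h2 (richFinite n k hk)
  rw [Set.ncard_coe_finset, h1] at h3
  exact_mod_cast h3

lemma sum_inv_sq (m : ℕ) (hm : 2 ≤ m) :
    ∑ d ∈ Icc 2 m, (1 / (d:ℝ)^2) ≤ 3/4 - 1/(m:ℝ) := by
  induction m, hm using Nat.le_induction with
  | base => norm_num
  | succ m hm ih =>
    rw [Finset.sum_Icc_succ_top (by omega : 2 ≤ m + 1)]
    have h1 : (0:ℝ) < m := by positivity
    have h2 : (0:ℝ) < (m:ℝ) + 1 := by positivity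
    have key : 1 / ((m:ℝ)+1)^2 ≤ 1/(m:ℝ) - 1/((m:ℝ)+1) := by
      rw [div_sub_div _ _ (ne_of_gt h1) (ne_of_gt h2)]
      rw [div_le_div_iff₀ (by positivity) (by positivity)]
      ring_nf
      nlinarith
    push_cast
    linarith

lemma sum_inv (m : ℕ) (hm : 17 ≤ m) :
    ∑ d ∈ Icc 2 m, (1 / (d:ℝ)) ≤ 15/2 + (m:ℝ)/16 := by
  have hIcc : Icc 2 m = Ioc 1 m := by rw [← Finset.Icc_add_one_left_eq_Ioc]; rfl
  have hsplit : (∑ d ∈ Ioc (1:ℕ) 16, (1/(d:ℝ))) + (∑ d ∈ Ioc (16:ℕ) m, (1/(d:ℝ)))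
      = ∑ d ∈ Ioc 1 m, (1/(d:ℝ)) :=
    Finset.sum_Ioc_consecutive _ (by omega) (by omega)
  have h1 : (∑ d ∈ Ioc (1:ℕ) 16, (1/(d:ℝ))) ≤ 15/2 := by
    have : ∀ d ∈ Ioc (1:ℕ) 16, (1/(d:ℝ)) ≤ 1/2 := by
      intro d hd
      simp only [Finset.mem_Ioc] at hd
      have : (2:ℝ) ≤ d := by exact_mod_cast hd.1
      rw [div_le_div_iff₀ (by linarith) (by norm_num)]
      linarith
    calc (∑ d ∈ Ioc (1:ℕ) 16, (1/(d:ℝ))) ≤ (Ioc (1:ℕ) 16).card • (1/2 : ℝ) :=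
          Finset.sum_le_card_nsmul _ _ _ this
      _ = 15/2 := by norm_num
  have h2 : (∑ d ∈ Ioc (16:ℕ) m, (1/(d:ℝ))) ≤ (m:ℝ)/16 := by
    have hb : ∀ d ∈ Ioc (16:ℕ) m, (1/(d:ℝ)) ≤ 1/16 := by
      intro d hd
      simp only [Finset.mem_Ioc] at hd
      have : (16:ℝ) ≤ d := by exact_mod_cast (by omega : 16 ≤ d)
      rw [div_le_div_iff₀ (by linarith) (by norm_num)]
      linarith
    calc (∑ d ∈ Ioc (16:ℕ) m, (1/(d:ℝ))) ≤ (Ioc (16:ℕ) m).card • (1/16 : ℝ) :=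
          Finset.sum_le_card_nsmul _ _ _ hb
      _ = ((m - 16 : ℕ) : ℝ) * (1/16) := by rw [Nat.card_Ioc]; simp [nsmul_eq_mul]
      _ ≤ (m:ℝ)/16 := by
          have : ((m - 16 : ℕ) : ℝ) ≤ (m:ℝ) := by exact_mod_cast Nat.sub_le m 16
          linarith
  rw [hIcc, ← hsplit]
  linarith

set_option maxHeartbeats 1600000 in
lemma coprime_count (m : ℕ) (hm : 1 ≤ m) :
    (m:ℝ)^2/768 ≤
      (((Icc (m/2+1) m ×ˢ Icc 1 m).filter (fun p => Nat.gcd p.1 p.2 = 1)).card : ℝ) := by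
  classical
  set q := m/2 with hq
  have hq1 : 2*q ≤ m := by omega
  have hq2 : m ≤ 2*q + 1 := by omega
  -- trivial lower bound via pairs (a, 1)
  have htriv : m - q ≤ ((Icc (q+1) m ×ˢ Icc 1 m).filter (fun p => Nat.gcd p.1 p.2 = 1)).card := by
    have hsub : (Icc (q+1) m) ×ˢ ({1} : Finset ℕ)
        ⊆ (Icc (q+1) m ×ˢ Icc 1 m).filter (fun p => Nat.gcd p.1 p.2 = 1) := by
      intro p hp
      simp only [Finset.mem_product, Finset.mem_singleton, Finset.mem_Icc] at hp
      simp only [Finset.mem_filter, Finset.mem_product, Finset.mem_Icc]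
      exact ⟨⟨hp.1, by omega, by omega⟩, by rw [hp.2]; exact Nat.gcd_one_right _⟩
    calc m - q = ((Icc (q+1) m) ×ˢ ({1} : Finset ℕ)).card := by
          rw [Finset.card_product, Nat.card_Icc, Finset.card_singleton]; omega
      _ ≤ _ := Finset.card_le_card hsub
  by_cases hcase : m ≤ 384
  · have h1 : (m:ℝ)^2/768 ≤ ((m - q : ℕ) : ℝ) := by
      have : ((m - q : ℕ) : ℝ) ≥ (m:ℝ)/2 := by
        have h2 : (m:ℕ) ≤ 2 * (m - q) := by omega
        have := (Nat.cast_le (α := ℝ)).mpr h2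
        push_cast at this
        linarith
      have hm384 : (m:ℝ) ≤ 384 := by exact_mod_cast hcase
      have hm0 : (0:ℝ) ≤ m := by positivity
      nlinarith
    calc (m:ℝ)^2/768 ≤ ((m - q : ℕ) : ℝ) := h1
      _ ≤ _ := by exact_mod_cast htriv
  · push_neg at hcase
    have hm17 : 17 ≤ m := by omega
    set Good := (Icc (q+1) m ×ˢ Icc 1 m).filter (fun p => Nat.gcd p.1 p.2 = 1) with hGood
    set Bad := (Icc (q+1) m ×ˢ Icc 1 m).filter (fun p => ¬ Nat.gcd p.1 p.2 = 1) with hBad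
    have hGB : Good.card + Bad.card = (m - q) * m := by
      rw [hGood, hBad, Finset.card_filter_add_card_filter_not,
        Finset.card_product, Nat.card_Icc, Nat.card_Icc]
      congr 1 <;> omega
    have hBadsub : Bad ⊆ (Icc 2 m).biUnion
        (fun d => ((Icc (q+1) m).filter (fun a => d ∣ a)) ×ˢ ((Icc 1 m).filter (fun b => d ∣ b))) := by
      intro p hp
      simp only [hBad, Finset.mem_filter, Finset.mem_product, Finset.mem_Icc] at hp
      obtain ⟨⟨⟨ha1, ha2⟩, hb1, hb2⟩, hgcd⟩ := hp
      have hapos : 0 < p.1 := by omega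
      have hgpos : 0 < Nat.gcd p.1 p.2 := Nat.gcd_pos_of_pos_left _ hapos
      have hgle : Nat.gcd p.1 p.2 ≤ p.1 := Nat.le_of_dvd hapos (Nat.gcd_dvd_left _ _)
      refine Finset.mem_biUnion.mpr ⟨Nat.gcd p.1 p.2, Finset.mem_Icc.mpr ⟨by omega, by omega⟩, ?_⟩
      simp only [Finset.mem_product, Finset.mem_filter, Finset.mem_Icc]
      exact ⟨⟨⟨ha1, ha2⟩, Nat.gcd_dvd_left _ _⟩, ⟨⟨hb1, hb2⟩, Nat.gcd_dvd_right _ _⟩⟩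
    have hcnt2 : ∀ d : ℕ, ((Icc 1 m).filter (fun b => d ∣ b)).card = m / d := by
      intro d
      rw [show Icc 1 m = Ioc 0 m from by rw [← Finset.Icc_add_one_left_eq_Ioc]; rfl]
      exact Nat.Ioc_filter_dvd_card_eq_div m d
    have hcnt1 : ∀ d : ℕ, ((Icc (q+1) m).filter (fun a => d ∣ a)).card = m / d - q / d := by
      intro d
      have hIoc : Icc (q+1) m = Ioc q m := by rw [← Finset.Icc_add_one_left_eq_Ioc]
      have hunion : Ioc 0 q ∪ Ioc q m = Ioc 0 m := Finset.Ioc_union_Ioc_eq_Ioc (by omega) (by omega)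
      have hdisj : Disjoint (Ioc 0 q) (Ioc q m) := by
        rw [Finset.disjoint_left]
        intro a haa hab
        simp only [Finset.mem_Ioc] at haa hab
        omega
      have := Nat.Ioc_filter_dvd_card_eq_div m d
      have hq' := Nat.Ioc_filter_dvd_card_eq_div q d
      have hsplit : ((Ioc 0 q).filter (fun a => d ∣ a)).card
          + ((Ioc q m).filter (fun a => d ∣ a)).card = m / d := by
        rw [← this, ← hunion, Finset.filter_union,
          Finset.card_union_of_disjoint (Finset.disjoint_filter_filter hdisj)]
      rw [hIoc]
      omega
    -- real bound on Bad
    have hBadR : (Bad.card : ℝ) ≤ 3*(m:ℝ)^2/8 + (m:ℝ)^2/16 + 15*(m:ℝ)/2 := by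
      have hb1 : Bad.card ≤ ∑ d ∈ Icc 2 m, (m / d - q / d) * (m / d) := by
        calc Bad.card ≤ _ := Finset.card_le_card hBadsub
          _ ≤ ∑ d ∈ Icc 2 m, (((Icc (q+1) m).filter (fun a => d ∣ a)) ×ˢ ((Icc 1 m).filter (fun b => d ∣ b))).card :=
            Finset.card_biUnion_le
          _ = ∑ d ∈ Icc 2 m, (m / d - q / d) * (m / d) := by
            refine Finset.sum_congr rfl fun d _ => ?_
            rw [Finset.card_product, hcnt1 d, hcnt2 d]
      have hb2 : ((∑ d ∈ Icc 2 m, (m / d - q / d) * (m / d) : ℕ) : ℝ)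
          ≤ ∑ d ∈ Icc 2 m, ((m:ℝ)^2/2 * (1/(d:ℝ)^2) + (m:ℝ) * (1/(d:ℝ))) := by
        push_cast
        refine Finset.sum_le_sum fun d hd => ?_
        simp only [Finset.mem_Icc] at hd
        have hd2 : 2 ≤ d := hd.1
        have hdR : (2:ℝ) ≤ (d:ℝ) := by exact_mod_cast hd2
        have hdpos : (0:ℝ) < d := by linarith
        -- cnt1 bound
        have hmono : q / d ≤ m / d := Nat.div_le_div_right (by omega)
        have hcast : ((m / d - q / d : ℕ) : ℝ) = ((m/d : ℕ):ℝ) - ((q/d : ℕ):ℝ) := by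
          push_cast [Nat.cast_sub hmono]; ring
        have hub : ((m/d : ℕ):ℝ) ≤ (m:ℝ)/(d:ℝ) := Nat.cast_div_le
        have hub' : ((m/d : ℕ):ℝ) * (d:ℝ) ≤ (m:ℝ) := by
          exact_mod_cast (Nat.cast_le (α := ℝ)).mpr (Nat.div_mul_le_self m d)
        have hlb' : (q:ℝ) - (d:ℝ) + 1 ≤ ((q/d : ℕ):ℝ) * (d:ℝ) := by
          have h1 : q < d * (q/d) + d := by
            have h2 := Nat.div_add_mod q d
            have h3 : q % d < d := Nat.mod_lt q (by omega)
            omega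
          have h1' : q + 1 ≤ d * (q/d) + d := by omega
          have h4 : (q:ℝ) + 1 ≤ (d:ℝ) * ((q/d : ℕ):ℝ) + d := by exact_mod_cast h1'
          linarith [h4, mul_comm ((q/d : ℕ):ℝ) ((d:ℝ))]
        have hq2R : (m:ℝ) ≤ 2*(q:ℝ)+1 := by exact_mod_cast hq2
        have hcnt1R : ((m / d - q / d : ℕ) : ℝ) ≤ (m:ℝ)/(2*(d:ℝ)) + 1 := by
          rw [hcast]
          have h2d : (0:ℝ) < 2*(d:ℝ) := by linarith
          refine le_of_mul_le_mul_right ?_ h2d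
          have hrhs : ((m:ℝ)/(2*(d:ℝ)) + 1) * (2*(d:ℝ)) = (m:ℝ) + 2*(d:ℝ) := by
            field_simp
          rw [hrhs]
          nlinarith [hub', hlb', hq2R]
        have hcnt2R : ((m/d : ℕ):ℝ) ≤ (m:ℝ)/(d:ℝ) := hub
        have hnn : (0:ℝ) ≤ ((m/d : ℕ):ℝ) := by positivity
        calc ((m / d - q / d : ℕ) : ℝ) * ((m/d : ℕ):ℝ)
            ≤ ((m:ℝ)/(2*(d:ℝ)) + 1) * ((m:ℝ)/(d:ℝ)) := by
              apply mul_le_mul hcnt1R hcnt2R hnn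
              positivity
          _ = (m:ℝ)^2/2 * (1/(d:ℝ)^2) + (m:ℝ) * (1/(d:ℝ)) := by
              field_simp
      have hsum1 := sum_inv_sq m (by omega)
      have hsum2 := sum_inv m hm17
      have hmpos : (0:ℝ) < m := by positivity
      have hsumtot : ∑ d ∈ Icc 2 m, ((m:ℝ)^2/2 * (1/(d:ℝ)^2) + (m:ℝ) * (1/(d:ℝ)))
          = (m:ℝ)^2/2 * (∑ d ∈ Icc 2 m, (1/(d:ℝ)^2)) + (m:ℝ) * (∑ d ∈ Icc 2 m, (1/(d:ℝ))) := by
        rw [Finset.sum_add_distrib, Finset.mul_sum, Finset.mul_sum]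
      have h1m : (0:ℝ) < 1/(m:ℝ) := by positivity
      have hchain : (Bad.card : ℝ) ≤ (m:ℝ)^2/2 * (3/4) + (m:ℝ) * (15/2 + (m:ℝ)/16) := by
        calc (Bad.card : ℝ) ≤ ((∑ d ∈ Icc 2 m, (m / d - q / d) * (m / d) : ℕ) : ℝ) := by
              exact_mod_cast hb1
          _ ≤ ∑ d ∈ Icc 2 m, ((m:ℝ)^2/2 * (1/(d:ℝ)^2) + (m:ℝ) * (1/(d:ℝ))) := hb2
          _ = (m:ℝ)^2/2 * (∑ d ∈ Icc 2 m, (1/(d:ℝ)^2)) + (m:ℝ) * (∑ d ∈ Icc 2 m, (1/(d:ℝ))) := hsumtot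
          _ ≤ (m:ℝ)^2/2 * (3/4) + (m:ℝ) * (15/2 + (m:ℝ)/16) := by
              have hA : (∑ d ∈ Icc 2 m, (1/(d:ℝ)^2)) ≤ 3/4 := by linarith
              nlinarith [hA, hsum2, hmpos]
      nlinarith [hchain]
    -- conclude
    have hGoodlb : ((m - q) * m : ℕ) = Good.card + Bad.card := hGB.symm
    have htot : (((m - q) * m : ℕ) : ℝ) ≥ (m:ℝ)/2 * (m:ℝ) := by
      have h2 : (m:ℕ) ≤ 2 * (m - q) := by omega
      have : (m:ℝ) ≤ 2 * ((m - q : ℕ):ℝ) := by exact_mod_cast h2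
      push_cast
      nlinarith [this, (by positivity : (0:ℝ) ≤ (m:ℝ))]
    have hGR : (Good.card : ℝ) ≥ (m:ℝ)/2 * (m:ℝ) - (3*(m:ℝ)^2/8 + (m:ℝ)^2/16 + 15*(m:ℝ)/2) := by
      have : (Good.card : ℝ) + (Bad.card : ℝ) = (((m - q) * m : ℕ) : ℝ) := by
        exact_mod_cast congrArg (fun j : ℕ => (j:ℝ)) hGB
      linarith
    have hm385 : (385:ℝ) ≤ (m:ℝ) := by exact_mod_cast hcase
    rw [hGood] at hGR
    nlinarith [hGR, hm385]

end Aux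

/-- There is an absolute constant `c > 0` such that for every `n ≥ 2` and `2 ≤ k ≤ n`,
the number of `k`-rich lines with respect to the cube lattice `{1, …, n}³ ⊂ ℝ³` is at
least `c * n⁶ / k⁴`. -/
theorem cube_lattice_rich_lines_lower_bound :
    ∃ c : ℝ, 0 < c ∧
      ∀ n k : ℕ, 2 ≤ n → 2 ≤ k → k ≤ n →
        c * (n : ℝ) ^ 6 / (k : ℝ) ^ 4 ≤
          ((Set.ncard {l : Set (Fin 3 → ℝ) |
              IsLine l ∧ k ≤ Set.ncard (cubeLattice 3 n ∩ l)}) : ℝ) := by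
  classical
  refine ⟨1/8388608, by norm_num, ?_⟩
  intro n k hn hk hkn
  show (1/8388608 : ℝ) * (n : ℝ) ^ 6 / (k : ℝ) ^ 4 ≤ ((RichSet n k).ncard : ℝ)
  have hk0 : 0 < k := by omega
  have hkR : (0:ℝ) < (k:ℝ) := by exact_mod_cast hk0
  have hnR : (0:ℝ) ≤ (n:ℝ) := by positivity
  rw [div_le_iff₀ (by positivity : (0:ℝ) < (k:ℝ)^4)]
  by_cases hcase : 2*k ≤ n
  · -- main case: k ≤ n/2
    set m := n/(2*k) with hmdef
    set q := m/2 with hqdef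
    set h := n/2 with hhdef
    have hm1 : 1 ≤ m := (Nat.one_le_div_iff (by omega)).mpr hcase
    have hh1 : 1 ≤ h := by omega
    have hmh : m = h/k := by rw [hmdef, hhdef, Nat.div_div_eq_div_mul]
    have hkm : k*m ≤ h := by
      rw [hmh, mul_comm]
      exact Nat.div_mul_le_self h k
    set Cfin := (Icc (q+1) m ×ˢ Icc 1 m).filter (fun p => Nat.gcd p.1 p.2 = 1) with hCfin
    set F := Cfin ×ˢ (Icc 1 m ×ˢ Icc 1 (q+1) ×ˢ Icc 1 h ×ˢ Icc 1 h) with hFdef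
    have hmemF : ∀ p ∈ F, (q+1 ≤ p.1.1 ∧ p.1.1 ≤ m) ∧ (1 ≤ p.1.2 ∧ p.1.2 ≤ m)
        ∧ Nat.gcd p.1.1 p.1.2 = 1
        ∧ (1 ≤ p.2.1 ∧ p.2.1 ≤ m) ∧ (1 ≤ p.2.2.1 ∧ p.2.2.1 ≤ q+1)
        ∧ (1 ≤ p.2.2.2.1 ∧ p.2.2.2.1 ≤ h) ∧ (1 ≤ p.2.2.2.2 ∧ p.2.2.2.2 ≤ h) := by
      intro p hp
      simp only [hFdef, hCfin, Finset.mem_product, Finset.mem_filter, Finset.mem_Icc] at hp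
      tauto
    have hmem : ∀ p ∈ F, Φ p ∈ RichSet n k := by
      intro p hp
      obtain ⟨⟨ha1, ha2⟩, ⟨hb1, hb2⟩, hab, ⟨hc1, hc2⟩, ⟨hx1, hx2⟩, ⟨hy1, hy2⟩, ⟨hz1, hz2⟩⟩ :=
        hmemF p hp
      have ha1' : 1 ≤ p.1.1 := by omega
      constructor
      · refine ⟨vec p.2.2.1 p.2.2.2.1 p.2.2.2.2, vec p.1.1 p.1.2 p.2.1, ?_, rfl⟩
        intro h0
        have h1 := congrFun h0 0
        simp only [vec0, Pi.zero_apply] at h1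
        have : p.1.1 = 0 := by exact_mod_cast h1
        omega
      · have hfact : p.1.1 + (k-1)*p.1.1 = k*p.1.1 := by
          have hk1 : k - 1 + 1 = k := by omega
          calc p.1.1 + (k-1)*p.1.1 = ((k-1)+1)*p.1.1 := by ring
            _ = k*p.1.1 := by rw [hk1]
        have hxn : p.2.2.1 + (k-1)*p.1.1 ≤ n := by
          calc p.2.2.1 + (k-1)*p.1.1 ≤ p.1.1 + (k-1)*p.1.1 :=
                Nat.add_le_add_right (le_trans hx2 ha1) _
            _ = k*p.1.1 := hfact
            _ ≤ k*m := Nat.mul_le_mul_left k ha2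
            _ ≤ h := hkm
            _ ≤ n := by omega
        have hyn : p.2.2.2.1 + (k-1)*p.1.2 ≤ n := by
          calc p.2.2.2.1 + (k-1)*p.1.2 ≤ h + (k-1)*p.1.2 := Nat.add_le_add_right hy2 _
            _ ≤ h + k*m := Nat.add_le_add_left (Nat.mul_le_mul (by omega) hb2) h
            _ ≤ h + h := Nat.add_le_add_left hkm h
            _ ≤ n := by omega
        have hzn : p.2.2.2.2 + (k-1)*p.2.1 ≤ n := by
          calc p.2.2.2.2 + (k-1)*p.2.1 ≤ h + (k-1)*p.2.1 := Nat.add_le_add_right hz2 _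
            _ ≤ h + k*m := Nat.add_le_add_left (Nat.mul_le_mul (by omega) hc2) h
            _ ≤ h + h := Nat.add_le_add_left hkm h
            _ ≤ n := by omega
        exact rich_lemma ha1' hx1 hy1 hz1 (by omega) hxn hyn hzn
    have hinj : Set.InjOn Φ F := by
      rintro ⟨⟨a,b⟩,c,x,y,z⟩ hp ⟨⟨a',b'⟩,c',x',y',z'⟩ hp' heq
      obtain ⟨⟨ha1, ha2⟩, ⟨hb1, hb2⟩, hab, ⟨hc1, hc2⟩, ⟨hx1, hx2⟩, _, _⟩ := hmemF _ hp
      obtain ⟨⟨ha1', ha2'⟩, ⟨hb1', hb2'⟩, hab', ⟨hc1', hc2'⟩, ⟨hx1', hx2'⟩, _, _⟩ := hmemF _ hp'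
      obtain ⟨rfl, rfl, rfl, rfl, rfl, rfl⟩ :=
        inj_lemma (by omega) hx1 (le_trans hx2 ha1) hab (by omega) hx1' (le_trans hx2' ha1')
          hab' heq
      rfl
    have hcard := card_le_ncard_rich hk F hmem hinj
    have hCcard : (m:ℝ)^2/768 ≤ (Cfin.card : ℝ) := by
      have := coprime_count m hm1
      rw [← hqdef] at this
      exact this
    have hFcard : F.card = Cfin.card * (m * ((q+1) * (h * h))) := by
      rw [hFdef]
      simp [Finset.card_product, Nat.card_Icc]
    have hn4km : (n:ℝ) ≤ 4*(k:ℝ)*(m:ℝ) := by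
      have h1 : n < m*(2*k) + 2*k := by
        rw [hmdef]
        exact Nat.lt_div_mul_add (by omega)
      have h2 : 2*k ≤ m*(2*k) := Nat.le_mul_of_pos_left (2*k) (by omega)
      have h5 : n ≤ 4*k*m := by
        have : n < m*(2*k) + m*(2*k) := by omega
        have heq4 : m*(2*k) + m*(2*k) = 4*k*m := by ring
        omega
      exact_mod_cast h5
    have hn4h : (n:ℝ) ≤ 4*(h:ℝ) := by
      have h5 : n ≤ 4*h := by omega
      exact_mod_cast h5
    have hm2q : (m:ℝ) ≤ 2*((q+1:ℕ):ℝ) := by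
      have : m ≤ 2*(q+1) := by omega
      exact_mod_cast this
    have e1 : (n:ℝ)^6 ≤ (4*(k:ℝ)*(m:ℝ))^4 * (4*(h:ℝ))^2 := by
      calc (n:ℝ)^6 = n^4 * n^2 := by ring
        _ ≤ (4*(k:ℝ)*(m:ℝ))^4 * (4*(h:ℝ))^2 :=
          mul_le_mul (pow_le_pow_left₀ hnR hn4km 4) (pow_le_pow_left₀ hnR hn4h 2)
            (by positivity) (by positivity)
    have e2 : (m:ℝ)^2/768 * ((m:ℝ) * (((q+1:ℕ):ℝ) * ((h:ℝ)*(h:ℝ)))) ≤ (F.card:ℝ) := by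
      have : (F.card:ℝ) = (Cfin.card:ℝ) * ((m:ℝ) * (((q+1:ℕ):ℝ) * ((h:ℝ)*(h:ℝ)))) := by
        rw [hFcard]; push_cast; ring
      rw [this]
      exact mul_le_mul_of_nonneg_right hCcard (by positivity)
    have hmR : (0:ℝ) ≤ (m:ℝ) := by positivity
    calc (1/8388608:ℝ) * (n:ℝ)^6
        ≤ (1/8388608:ℝ) * ((4*(k:ℝ)*(m:ℝ))^4 * (4*(h:ℝ))^2) :=
          mul_le_mul_of_nonneg_left e1 (by norm_num)
      _ = (1/2048:ℝ) * ((m:ℝ)^4 * ((h:ℝ)^2 * (k:ℝ)^4)) := by ring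
      _ ≤ (1/2048:ℝ) * ((2*((q+1:ℕ):ℝ)*(m:ℝ)^3) * ((h:ℝ)^2 * (k:ℝ)^4)) := by
          have h4 : (m:ℝ)^4 ≤ 2*((q+1:ℕ):ℝ)*(m:ℝ)^3 := by
            calc (m:ℝ)^4 = (m:ℝ) * (m:ℝ)^3 := by ring
              _ ≤ (2*((q+1:ℕ):ℝ)) * (m:ℝ)^3 :=
                mul_le_mul_of_nonneg_right hm2q (by positivity)
              _ = 2*((q+1:ℕ):ℝ)*(m:ℝ)^3 := by ring
          have := mul_le_mul_of_nonneg_right h4 (show (0:ℝ) ≤ (h:ℝ)^2 * (k:ℝ)^4 by positivity)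
          linarith
      _ = (1/1024:ℝ) * ((m:ℝ)^3 * (((q+1:ℕ):ℝ) * ((h:ℝ)^2 * (k:ℝ)^4))) := by ring
      _ ≤ (1/768:ℝ) * ((m:ℝ)^3 * (((q+1:ℕ):ℝ) * ((h:ℝ)^2 * (k:ℝ)^4))) := by
          have : (0:ℝ) ≤ (m:ℝ)^3 * (((q+1:ℕ):ℝ) * ((h:ℝ)^2 * (k:ℝ)^4)) := by positivity
          linarith
      _ = ((m:ℝ)^2/768 * ((m:ℝ) * (((q+1:ℕ):ℝ) * ((h:ℝ)*(h:ℝ))))) * (k:ℝ)^4 := by ring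
      _ ≤ (F.card:ℝ) * (k:ℝ)^4 := mul_le_mul_of_nonneg_right e2 (by positivity)
      _ ≤ ((RichSet n k).ncard:ℝ) * (k:ℝ)^4 := mul_le_mul_of_nonneg_right hcard (by positivity)
  · -- case n < 2k : axis-parallel lines suffice
    push_neg at hcase
    set F := ({((1,0) : ℕ × ℕ)} : Finset (ℕ × ℕ)) ×ˢ
      (({0} : Finset ℕ) ×ˢ ({1} : Finset ℕ) ×ˢ Icc 1 n ×ˢ Icc 1 n) with hFdef
    have hmemF : ∀ p ∈ F, p.1.1 = 1 ∧ p.1.2 = 0 ∧ p.2.1 = 0 ∧ p.2.2.1 = 1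
        ∧ (1 ≤ p.2.2.2.1 ∧ p.2.2.2.1 ≤ n) ∧ (1 ≤ p.2.2.2.2 ∧ p.2.2.2.2 ≤ n) := by
      intro p hp
      simp only [hFdef, Finset.mem_product, Finset.mem_singleton, Finset.mem_Icc,
        Prod.ext_iff] at hp
      tauto
    have hmem : ∀ p ∈ F, Φ p ∈ RichSet n k := by
      intro p hp
      obtain ⟨ha, hb, hc, hx, ⟨hy1, hy2⟩, ⟨hz1, hz2⟩⟩ := hmemF p hp
      constructor
      · refine ⟨vec p.2.2.1 p.2.2.2.1 p.2.2.2.2, vec p.1.1 p.1.2 p.2.1, ?_, rfl⟩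
        intro h0
        have h1 := congrFun h0 0
        simp only [vec0, Pi.zero_apply] at h1
        rw [ha] at h1
        norm_num at h1
      · have hxn : p.2.2.1 + (k-1)*p.1.1 ≤ n := by
          rw [hx, ha]
          omega
        have hyn : p.2.2.2.1 + (k-1)*p.1.2 ≤ n := by rw [hb]; omega
        have hzn : p.2.2.2.2 + (k-1)*p.2.1 ≤ n := by rw [hc]; omega
        exact rich_lemma (by omega) (by omega) hy1 hz1 (by omega) hxn hyn hzn
    have hinj : Set.InjOn Φ F := by
      rintro ⟨⟨a,b⟩,c,x,y,z⟩ hp ⟨⟨a',b'⟩,c',x',y',z'⟩ hp' heq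
      obtain ⟨ha, hb, hc, hx, ⟨hy1, hy2⟩, hz1, hz2⟩ := hmemF _ hp
      obtain ⟨ha', hb', hc', hx', ⟨hy1', hy2'⟩, hz1', hz2'⟩ := hmemF _ hp'
      have haa : a = 1 := ha
      have hbb : b = 0 := hb
      have hcc : c = 0 := hc
      have hxx : x = 1 := hx
      have haa' : a' = 1 := ha'
      have hbb' : b' = 0 := hb'
      have hcc' : c' = 0 := hc'
      have hxx' : x' = 1 := hx'
      subst haa hbb hcc hxx haa' hbb' hcc' hxx'
      obtain ⟨-, -, -, -, rfl, rfl⟩ :=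
        inj_lemma (le_refl 1) (le_refl 1) (le_refl 1) (by norm_num)
          (le_refl 1) (le_refl 1) (le_refl 1) (by norm_num) heq
      rfl
    have hcard := card_le_ncard_rich hk F hmem hinj
    have hFcard : F.card = n * n := by
      rw [hFdef]
      simp [Finset.card_product, Nat.card_Icc]
    have hn2k : (n:ℝ) ≤ 2*(k:ℝ) := by
      have : n ≤ 2*k := by omega
      exact_mod_cast this
    calc (1/8388608:ℝ) * (n:ℝ)^6
        ≤ (1/8388608:ℝ) * ((2*(k:ℝ))^4 * (n:ℝ)^2) := by
          have e1 : (n:ℝ)^6 = n^4 * n^2 := by ring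
          have e2 : (n:ℝ)^4 ≤ (2*(k:ℝ))^4 := pow_le_pow_left₀ hnR hn2k 4
          have e3 := mul_le_mul_of_nonneg_right e2 (show (0:ℝ) ≤ (n:ℝ)^2 by positivity)
          rw [e1]
          linarith
      _ = ((16:ℝ)/8388608) * ((n:ℝ)^2 * (k:ℝ)^4) := by ring
      _ ≤ (n:ℝ)^2 * (k:ℝ)^4 := by
          have : (0:ℝ) ≤ (n:ℝ)^2 * (k:ℝ)^4 := by positivity
          linarith
      _ = ((n*n : ℕ):ℝ) * (k:ℝ)^4 := by push_cast; ring
      _ = (F.card:ℝ) * (k:ℝ)^4 := by rw [hFcard]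
      _ ≤ ((RichSet n k).ncard:ℝ) * (k:ℝ)^4 := mul_le_mul_of_nonneg_right hcard (by positivity)
end

section
/- For every integer d ≥ 2 there is a constant c_d > 0 depending only on d such that for every integer n ≥ 2 and every integer k with 2 ≤ k ≤ n, the number of k-rich lines with respect to the cube lattice P = {1, 2, …, n}^d ⊂ ℝ^d is at least c_d·n^{2d}/k^{d+1} (that is, at least c_d·N²/k^{d+1} where N = n^d = |P|). -/
namespace RichAux

open Finset
open scoped Classical


lemma nat_sum_union_le {α : Type*} [DecidableEq α] (A B : Finset α) (f : α → ℕ) :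
    ∑ x ∈ A ∪ B, f x ≤ ∑ x ∈ A, f x + ∑ x ∈ B, f x := by
  have h := Finset.sum_union_inter (s₁ := A) (s₂ := B) (f := f)
  omega

lemma nat_sum_biUnion_le {α β : Type*} [DecidableEq α] [DecidableEq β]
    (s : Finset α) (t : α → Finset β) (f : β → ℕ) :
    ∑ x ∈ s.biUnion t, f x ≤ ∑ a ∈ s, ∑ x ∈ t a, f x := by
  classical
  induction s using Finset.induction_on with
  | empty => simp
  | insert _ _ ha ih =>
    rename_i a s
    rw [Finset.biUnion_insert, Finset.sum_insert ha]
    exact (nat_sum_union_le _ _ f).trans (by omega)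

lemma gauss_Icc (m : ℕ) : 2 * ∑ u ∈ Icc 1 m, u = m * (m + 1) := by
  induction m with
  | zero => simp
  | succ m ih =>
    rw [Finset.sum_Icc_succ_top (by omega)]
    ring_nf
    ring_nf at ih
    omega

lemma Ioc_eq_Icc (m : ℕ) : Finset.Ioc 0 m = Finset.Icc 1 m := by
  ext x; simp [Finset.mem_Ioc, Finset.mem_Icc]; omega

lemma card_dvd_filter (m g : ℕ) : ((Icc 1 m).filter (fun v => g ∣ v)).card = m / g := by
  rw [← Ioc_eq_Icc]
  simpa using Nat.Ioc_filter_dvd_card_eq_div m g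

lemma dvd_filter_eq_image (m g : ℕ) (hg : 1 ≤ g) :
    (Icc 1 m).filter (fun v => g ∣ v) = (Icc 1 (m / g)).image (fun j => g * j) := by
  ext u
  simp only [Finset.mem_filter, Finset.mem_Icc, Finset.mem_image]
  constructor
  · rintro ⟨⟨h1, h2⟩, j, rfl⟩
    refine ⟨j, ⟨by nlinarith, ?_⟩, rfl⟩
    exact Nat.le_div_iff_mul_le (by omega) |>.2 (by rw [mul_comm] at h2; exact h2)
  · rintro ⟨j, ⟨hj1, hj2⟩, rfl⟩
    have h1 : g * j ≤ g * (m / g) := Nat.mul_le_mul_left _ hj2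
    have h2 : g * (m / g) ≤ m := Nat.mul_div_le m g
    have h3 : 1 * 1 ≤ g * j := Nat.mul_le_mul hg hj1
    exact ⟨⟨by omega, h1.trans h2⟩, ⟨j, rfl⟩⟩

lemma sum_dvd_filter_le (m g : ℕ) (hg : 1 ≤ g) :
    2 * ∑ u ∈ (Icc 1 m).filter (fun v => g ∣ v), u = g * ((m / g) * (m / g + 1)) := by
  rw [dvd_filter_eq_image m g hg]
  rw [Finset.sum_image (by intro a _ b _ h; exact Nat.eq_of_mul_eq_mul_left (by omega) h)]
  rw [← Finset.mul_sum, mul_left_comm, gauss_Icc (m / g)]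

lemma telescope (N : ℕ) : ∑ j ∈ Finset.Ico 17 N, (1 : ℝ) / (j : ℝ) ^ 2 ≤ 1 / 16 := by
  rcases le_or_gt N 17 with h | h
  · rw [Finset.Ico_eq_empty (by omega)]; norm_num
  · have key : ∀ M : ℕ, 17 ≤ M → ∑ j ∈ Finset.Ico 17 M, (1 : ℝ) / (j : ℝ) ^ 2 ≤
        1 / 16 - 1 / ((M : ℝ) - 1) := by
      intro M hM
      induction M, hM using Nat.le_induction with
      | base => norm_num
      | succ M hM ih =>
        rw [Finset.sum_Ico_succ_top (by omega)]
        have hM1 : (1:ℝ) ≤ (M:ℝ) - 1 := by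
          have : (17:ℝ) ≤ (M:ℝ) := by exact_mod_cast hM
          linarith
        have hstep : (1 : ℝ) / (M : ℝ) ^ 2 ≤ 1 / ((M:ℝ) - 1) - 1 / (M:ℝ) := by
          rw [div_sub_div _ _ (by linarith) (by linarith), div_le_div_iff₀ (by nlinarith) (by nlinarith)]
          ring_nf
          nlinarith
        have hcast : ((M + 1 : ℕ) : ℝ) - 1 = (M : ℝ) := by push_cast; ring
        rw [hcast]
        linarith
    exact (key N (by omega)).trans (by
      have : (0:ℝ) < (N:ℝ) - 1 := by
        have : (17:ℝ) ≤ (N:ℝ) := by exact_mod_cast h.le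
        linarith
      have := one_div_pos.2 this
      linarith)

lemma primes_inv_sq_le (M : ℕ) :
    ∑ p ∈ (Finset.range M).filter Nat.Prime, (1 : ℝ) / (p : ℝ) ^ 2 ≤
      (1:ℝ)/4 + 1/9 + 1/25 + 1/49 + 1/121 + 1/169 + 1/16 := by
  classical
  set P := (Finset.range M).filter Nat.Prime with hP
  rw [← Finset.sum_filter_add_sum_filter_not P (fun p => p < 17)]
  have h1 : ∑ p ∈ P.filter (fun p => p < 17), (1 : ℝ) / (p : ℝ) ^ 2 ≤
      (1:ℝ)/4 + 1/9 + 1/25 + 1/49 + 1/121 + 1/169 := by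
    have hsub : P.filter (fun p => p < 17) ⊆ ({2,3,5,7,11,13} : Finset ℕ) := by
      intro p hp
      simp only [hP, Finset.mem_filter, Finset.mem_range] at hp
      obtain ⟨⟨_, hprime⟩, hlt⟩ := hp
      interval_cases p <;> first | (exfalso; revert hprime; decide) | decide
    refine (Finset.sum_le_sum_of_subset_of_nonneg hsub (by intros; positivity)).trans ?_
    norm_num
  have h2 : ∑ p ∈ P.filter (fun p => ¬ p < 17), (1 : ℝ) / (p : ℝ) ^ 2 ≤ 1 / 16 := by
    have hsub : P.filter (fun p => ¬ p < 17) ⊆ Finset.Ico 17 M := by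
      intro p hp
      simp only [hP, Finset.mem_filter, Finset.mem_range, not_lt] at hp
      simp [Finset.mem_Ico]; omega
    exact (Finset.sum_le_sum_of_subset_of_nonneg hsub (by intros; positivity)).trans (telescope M)
  linarith

/-- The weighted coprime pair sum. -/
def S2 (m : ℕ) : ℕ :=
  ∑ p ∈ ((Icc 1 m) ×ˢ (Icc 1 m)).filter (fun p : ℕ × ℕ => Nat.Coprime p.1 p.2), p.1

theorem coprime_weight_sum (m : ℕ) : (m : ℝ) ^ 3 ≤ 600 * (S2 m : ℝ) := by
  classical
  set box := (Icc 1 m) ×ˢ (Icc 1 m) with hbox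
  have htot : 2 * ∑ p ∈ box, p.1 = m * (m * (m + 1)) := by
    rw [hbox, Finset.sum_product]
    simp only [Finset.sum_const, smul_eq_mul, Nat.card_Icc, Nat.add_sub_cancel]
    rw [← Finset.mul_sum, mul_left_comm, gauss_Icc]
  have hsplit : ∑ p ∈ box.filter (fun p : ℕ × ℕ => Nat.Coprime p.1 p.2), p.1
      + ∑ p ∈ box.filter (fun p : ℕ × ℕ => ¬ Nat.Coprime p.1 p.2), p.1
      = ∑ p ∈ box, p.1 :=
    Finset.sum_filter_add_sum_filter_not box _ _
  set P := (Finset.range (m+1)).filter Nat.Prime with hPdef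
  have hcover : box.filter (fun p : ℕ × ℕ => ¬ Nat.Coprime p.1 p.2) ⊆
      P.biUnion (fun g => box.filter (fun p : ℕ × ℕ => g ∣ p.1 ∧ g ∣ p.2)) := by
    intro p hp
    simp only [Finset.mem_filter] at hp
    obtain ⟨hpbox, hnc⟩ := hp
    have hp1 : 1 ≤ p.1 ∧ p.1 ≤ m := by
      have h := hpbox; rw [hbox, Finset.mem_product] at h
      simpa [Finset.mem_Icc] using h.1
    have hgcd : 2 ≤ Nat.gcd p.1 p.2 := by
      have h0 : Nat.gcd p.1 p.2 ≠ 0 := by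
        intro h; have := Nat.eq_zero_of_gcd_eq_zero_left h; omega
      have h1 : Nat.gcd p.1 p.2 ≠ 1 := hnc
      omega
    set g := Nat.minFac (Nat.gcd p.1 p.2) with hg
    have hgp : Nat.Prime g := Nat.minFac_prime (by omega)
    have hgdvd : g ∣ Nat.gcd p.1 p.2 := Nat.minFac_dvd _
    have hg1 : g ∣ p.1 := hgdvd.trans (Nat.gcd_dvd_left _ _)
    have hg2 : g ∣ p.2 := hgdvd.trans (Nat.gcd_dvd_right _ _)
    have hgle : g ≤ m := le_trans (Nat.le_of_dvd (by omega) hg1) hp1.2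
    rw [Finset.mem_biUnion]
    refine ⟨g, ?_, ?_⟩
    · simp only [hPdef, Finset.mem_filter, Finset.mem_range]
      exact ⟨by omega, hgp⟩
    · simp only [Finset.mem_filter]
      exact ⟨hpbox, hg1, hg2⟩
  have hBg : ∀ g ∈ P, ((∑ p ∈ box.filter (fun p : ℕ × ℕ => g ∣ p.1 ∧ g ∣ p.2), p.1 : ℕ) : ℝ)
      ≤ (m:ℝ)^3 * ((1:ℝ) / (g:ℝ)^2) := by
    intro g hgP
    have hgprime : Nat.Prime g := by
      simp only [hPdef, Finset.mem_filter] at hgP; exact hgP.2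
    have hgm : g ≤ m := by
      simp only [hPdef, Finset.mem_filter, Finset.mem_range] at hgP; omega
    have hg1 : 1 ≤ g := hgprime.one_lt.le.trans' (by omega)
    have hfp : box.filter (fun p : ℕ × ℕ => g ∣ p.1 ∧ g ∣ p.2)
        = ((Icc 1 m).filter (fun v => g ∣ v)) ×ˢ ((Icc 1 m).filter (fun v => g ∣ v)) := by
      rw [hbox]; exact Finset.filter_product _ _
    set t := m / g with ht
    have ht1 : 1 ≤ t := Nat.one_le_div_iff (by omega) |>.2 hgm
    have hnat : ∑ p ∈ box.filter (fun p : ℕ × ℕ => g ∣ p.1 ∧ g ∣ p.2), p.1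
        = (∑ u ∈ (Icc 1 m).filter (fun v => g ∣ v), u) * t := by
      rw [hfp, Finset.sum_product]
      simp only [Finset.sum_const, smul_eq_mul, card_dvd_filter]
      rw [← Finset.mul_sum, mul_comm]
    have hsum := sum_dvd_filter_le m g hg1
    have hgt : g * t ≤ m := Nat.mul_div_le m g
    -- cast everything
    have hgtR : (g:ℝ) * (t:ℝ) ≤ (m:ℝ) := by exact_mod_cast hgt
    have hgR : (1:ℝ) ≤ (g:ℝ) := by exact_mod_cast hg1
    have htR : (1:ℝ) ≤ (t:ℝ) := by exact_mod_cast ht1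
    have hSgR : 2 * ((∑ u ∈ (Icc 1 m).filter (fun v => g ∣ v), u : ℕ) : ℝ)
        = (g:ℝ) * ((t:ℝ) * ((t:ℝ) + 1)) := by exact_mod_cast hsum
    have hnatR : ((∑ p ∈ box.filter (fun p : ℕ × ℕ => g ∣ p.1 ∧ g ∣ p.2), p.1 : ℕ) : ℝ)
        = ((∑ u ∈ (Icc 1 m).filter (fun v => g ∣ v), u : ℕ) : ℝ) * (t:ℝ) := by
      exact_mod_cast hnat
    rw [hnatR]
    have hg2pos : (0:ℝ) < (g:ℝ)^2 := by positivity
    rw [show (m:ℝ)^3 * (1/(g:ℝ)^2) = (m:ℝ)^3/(g:ℝ)^2 by ring, le_div_iff₀ hg2pos]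
    have e1 : ((g:ℝ)*(t:ℝ))^3 ≤ (m:ℝ)^3 := by
      apply pow_le_pow_left₀ (by positivity) hgtR
    have e2 : (g:ℝ) ≤ (g:ℝ)*(t:ℝ) := by nlinarith
    have e3 : (g:ℝ)*((g:ℝ)*(t:ℝ))^2 ≤ ((g:ℝ)*(t:ℝ))^3 := by nlinarith [sq_nonneg ((g:ℝ)*(t:ℝ))]
    have heq : ((∑ u ∈ (Icc 1 m).filter (fun v => g ∣ v), u : ℕ) : ℝ)
        = (g:ℝ) * ((t:ℝ) * ((t:ℝ) + 1)) / 2 := by linarith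
    rw [heq]
    nlinarith [e1, e3]
  -- combine
  have hBnat : ∑ p ∈ box.filter (fun p : ℕ × ℕ => ¬ Nat.Coprime p.1 p.2), p.1
      ≤ ∑ g ∈ P, ∑ p ∈ box.filter (fun p : ℕ × ℕ => g ∣ p.1 ∧ g ∣ p.2), p.1 :=
    le_trans (Finset.sum_le_sum_of_subset hcover) (nat_sum_biUnion_le _ _ _)
  have hBR : ((∑ p ∈ box.filter (fun p : ℕ × ℕ => ¬ Nat.Coprime p.1 p.2), p.1 : ℕ) : ℝ)
      ≤ (m:ℝ)^3 * ((1:ℝ)/4 + 1/9 + 1/25 + 1/49 + 1/121 + 1/169 + 1/16) := by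
    have h1 : ((∑ p ∈ box.filter (fun p : ℕ × ℕ => ¬ Nat.Coprime p.1 p.2), p.1 : ℕ) : ℝ)
        ≤ ∑ g ∈ P, ((∑ p ∈ box.filter (fun p : ℕ × ℕ => g ∣ p.1 ∧ g ∣ p.2), p.1 : ℕ) : ℝ) := by
      exact_mod_cast hBnat
    refine h1.trans ?_
    have h2 : ∑ g ∈ P, ((∑ p ∈ box.filter (fun p : ℕ × ℕ => g ∣ p.1 ∧ g ∣ p.2), p.1 : ℕ) : ℝ)
        ≤ ∑ g ∈ P, (m:ℝ)^3 * ((1:ℝ) / (g:ℝ)^2) := Finset.sum_le_sum hBg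
    refine h2.trans ?_
    rw [← Finset.mul_sum]
    have := primes_inv_sq_le (m+1)
    have hm3 : (0:ℝ) ≤ (m:ℝ)^3 := by positivity
    exact mul_le_mul_of_nonneg_left (by rw [hPdef] at *; exact this) hm3
  have htotR : 2 * ((∑ p ∈ box, p.1 : ℕ) : ℝ) = (m:ℝ) * ((m:ℝ) * ((m:ℝ)+1)) := by
    exact_mod_cast htot
  have hsplitR : ((S2 m : ℕ) : ℝ)
      + ((∑ p ∈ box.filter (fun p : ℕ × ℕ => ¬ Nat.Coprime p.1 p.2), p.1 : ℕ) : ℝ)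
      = ((∑ p ∈ box, p.1 : ℕ) : ℝ) := by
    rw [S2]; exact_mod_cast hsplit
  nlinarith [hBR, htotR, hsplitR, sq_nonneg (m:ℝ)]


open Finset
open scoped Classical

variable {e : ℕ}

/-- cast a ℕ-vector to ℝ. -/
def vecN (a : Fin (e+2) → ℕ) : Fin (e+2) → ℝ := fun i => (a i : ℝ)

def lineOf (a w : Fin (e+2) → ℕ) : Set (Fin (e+2) → ℝ) :=
  {x | ∃ t : ℝ, x = vecN a + t • vecN w}

lemma vecN_inj {a a' : Fin (e+2) → ℕ} (h : vecN a = vecN a') : a = a' := by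
  funext i
  have h2 := congrFun h i
  simp only [vecN] at h2
  exact_mod_cast h2

lemma mem_lineOf (a w : Fin (e+2) → ℕ) (j : ℕ) :
    vecN (fun i => a i + j * w i) ∈ lineOf a w := by
  refine ⟨(j : ℝ), ?_⟩
  funext i
  simp only [vecN, Pi.add_apply, Pi.smul_apply, smul_eq_mul]
  push_cast
  ring

lemma self_mem_lineOf (a w : Fin (e+2) → ℕ) : vecN a ∈ lineOf a w :=
  ⟨0, by simp⟩

lemma isLine_lineOf {a w : Fin (e+2) → ℕ} (hw : 1 ≤ w 0) : IsLine (lineOf a w) := by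
  refine ⟨vecN a, vecN w, ?_, rfl⟩
  intro h
  have := congrFun h 0
  simp only [vecN, Pi.zero_apply, Nat.cast_eq_zero] at this
  omega

lemma cubeLattice_finite (d n : ℕ) : (cubeLattice d n).Finite := by
  classical
  have hsub : cubeLattice d n ⊆
      (fun (a : Fin d → ℕ) => (fun i => (a i : ℝ))) ''
        ↑(Fintype.piFinset (fun _ : Fin d => Finset.Icc 1 n)) := by
    intro x hx
    choose f h1 h2 h3 using hx
    refine ⟨f, ?_, ?_⟩
    · simp only [Finset.mem_coe, Fintype.mem_piFinset, Finset.mem_Icc]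
      exact fun i => ⟨h1 i, h2 i⟩
    · funext i; exact (h3 i).symm
  exact Set.Finite.subset (Set.Finite.image _ (Finset.finite_toSet _)) hsub


lemma rich_lineOf {n k : ℕ} (hk : 1 ≤ k) (a w Q : Fin (e+2) → ℕ)
    (hw : 1 ≤ w 0) (ha : ∀ i, 1 ≤ a i ∧ a i ≤ Q i) (hQw : ∀ i, Q i + (k-1) * w i ≤ n) :
    k ≤ (cubeLattice (e+2) n ∩ lineOf a w).ncard := by
  classical
  set pts : ℕ → (Fin (e+2) → ℝ) := fun j => vecN (fun i => a i + j * w i) with hpts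
  set F : Finset (Fin (e+2) → ℝ) := (Finset.range k).image pts with hF
  have hinj : Set.InjOn pts ↑(Finset.range k) := by
    intro j _ j' _ hEq
    have h0 := congrFun hEq 0
    simp only [hpts, vecN] at h0
    have h0' : a 0 + j * w 0 = a 0 + j' * w 0 := by exact_mod_cast h0
    have : j * w 0 = j' * w 0 := by omega
    exact Nat.eq_of_mul_eq_mul_right (by omega) this
  have hcard : F.card = k := by
    rw [hF, Finset.card_image_of_injOn hinj, Finset.card_range]
  have hsub : ↑F ⊆ cubeLattice (e+2) n ∩ lineOf a w := by
    intro x hx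
    simp only [hF, Finset.coe_image, Set.mem_image, Finset.mem_coe, Finset.mem_range] at hx
    obtain ⟨j, hj, rfl⟩ := hx
    constructor
    · intro i
      refine ⟨a i + j * w i, by have := (ha i).1; omega, ?_, rfl⟩
      have hj' : j ≤ k - 1 := by omega
      have hmul := Nat.mul_le_mul_right (w i) hj'
      have hq := hQw i
      have hai := (ha i).2
      omega
    · exact mem_lineOf a w j
  have hfin : (cubeLattice (e+2) n ∩ lineOf a w).Finite :=
    (cubeLattice_finite _ _).inter_of_left _
  calc k = F.card := hcard.symm
    _ = (↑F : Set (Fin (e+2) → ℝ)).ncard := (Set.ncard_coe_finset F).symm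
    _ ≤ _ := Set.ncard_le_ncard hsub hfin

lemma exists_shift {a w a' w' : Fin (e+2) → ℕ} (h : lineOf a w = lineOf a' w') :
    (∃ s : ℝ, vecN a' = vecN a + s • vecN w) ∧ (∃ t : ℝ, vecN w' = t • vecN w) := by
  have h1 : vecN a' ∈ lineOf a w := h ▸ self_mem_lineOf a' w'
  have h2 : vecN a' + vecN w' ∈ lineOf a w := by
    rw [h]
    exact ⟨1, by simp⟩
  obtain ⟨s, hs⟩ := h1
  obtain ⟨s', hs'⟩ := h2
  refine ⟨⟨s, hs⟩, s' - s, ?_⟩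
  have : vecN a' + vecN w' - vecN a' = (vecN a + s' • vecN w) - (vecN a + s • vecN w) := by
    rw [← hs, ← hs']
  rw [sub_smul]
  rw [show vecN a' + vecN w' - vecN a' = vecN w' by abel] at this
  rw [this]
  abel

lemma dir_eq {w w' : Fin (e+2) → ℕ} (hw : 1 ≤ w 0) (hw' : 1 ≤ w' 0)
    (hc : Nat.Coprime (w 0) (w 1)) (hc' : Nat.Coprime (w' 0) (w' 1))
    {t : ℝ} (h : vecN w' = t • vecN w) : w' = w := by
  have h0 : (w' 0 : ℝ) = t * (w 0 : ℝ) := by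
    have := congrFun h 0; simpa [vecN] using this
  have h1 : (w' 1 : ℝ) = t * (w 1 : ℝ) := by
    have := congrFun h 1; simpa [vecN] using this
  have hcross : (w' 0 : ℝ) * (w 1 : ℝ) = (w' 1 : ℝ) * (w 0 : ℝ) := by
    rw [h0, h1]; ring
  have hcrossN : w' 0 * w 1 = w' 1 * w 0 := by exact_mod_cast hcross
  have d1 : w 0 ∣ w' 0 := by
    refine hc.dvd_of_dvd_mul_right ?_
    rw [hcrossN]; exact Dvd.intro_left _ rfl
  have d2 : w' 0 ∣ w 0 := by
    refine hc'.dvd_of_dvd_mul_right ?_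
    have heq : w 0 * w' 1 = w' 0 * w 1 := by
      rw [mul_comm]
      exact hcrossN.symm
    exact heq ▸ Dvd.intro _ rfl
  have h00 : w' 0 = w 0 := Nat.dvd_antisymm d2 d1
  have ht : t = 1 := by
    have hw0 : (w 0 : ℝ) ≠ 0 := by
      simp only [ne_eq, Nat.cast_eq_zero]; omega
    have h0' : (w 0 : ℝ) = t * (w 0 : ℝ) := by rw [h00] at h0; exact h0
    have h0'' : t * (w 0 : ℝ) = 1 * (w 0 : ℝ) := by rw [one_mul, ← h0']
    exact mul_right_cancel₀ hw0 h0''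
  rw [ht, one_smul] at h
  exact vecN_inj h


lemma int_shift {a a' w : Fin (e+2) → ℕ} (hw : 1 ≤ w 0)
    (hc : Nat.Coprime (w 0) (w 1)) {s : ℝ}
    (h : vecN a' = vecN a + s • vecN w) :
    ∃ z : ℤ, ∀ i, (a' i : ℤ) = (a i : ℤ) + z * (w i : ℤ) := by
  have hcoord : ∀ i, (a' i : ℝ) = (a i : ℝ) + s * (w i : ℝ) := by
    intro i
    have := congrFun h i
    simpa [vecN] using this
  set z0 : ℤ := (a' 0 : ℤ) - (a 0 : ℤ) with hz0def
  set z1 : ℤ := (a' 1 : ℤ) - (a 1 : ℤ) with hz1def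
  have hz0 : (z0 : ℝ) = s * (w 0 : ℝ) := by
    have := hcoord 0; push_cast [hz0def]; linarith
  have hz1 : (z1 : ℝ) = s * (w 1 : ℝ) := by
    have := hcoord 1; push_cast [hz1def]; linarith
  have hcross : (z0 : ℝ) * (w 1 : ℝ) = (z1 : ℝ) * (w 0 : ℝ) := by
    rw [hz0, hz1]; ring
  have hcrossZ : z0 * (w 1 : ℤ) = z1 * (w 0 : ℤ) := by exact_mod_cast hcross
  have hdvd : (w 0 : ℤ) ∣ z0 := by
    have hcop : IsCoprime ((w 0 : ℕ) : ℤ) ((w 1 : ℕ) : ℤ) := hc.isCoprime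
    refine hcop.dvd_of_dvd_mul_right ?_
    rw [hcrossZ]
    exact Dvd.intro_left _ rfl
  obtain ⟨z, hz⟩ := hdvd
  have hw0R : ((w 0 : ℕ) : ℝ) ≠ 0 := by
    simp only [ne_eq, Nat.cast_eq_zero]; omega
  have hs : s = (z : ℝ) := by
    have h1 : (z0 : ℝ) = (z : ℝ) * ((w 0 : ℕ) : ℝ) := by
      rw [hz]; push_cast; ring
    rw [hz0] at h1
    exact mul_right_cancel₀ hw0R (by rw [mul_comm (z:ℝ)] at h1; linarith)
  refine ⟨z, fun i => ?_⟩
  have hi := hcoord i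
  rw [hs] at hi
  exact_mod_cast hi

lemma fiber_eq {w : Fin (e+2) → ℕ} (hw : 1 ≤ w 0) (hc : Nat.Coprime (w 0) (w 1))
    {a a' : Fin (e+2) → ℕ} (ha : ∀ i, 1 ≤ a i) (ha' : ∀ i, 1 ≤ a' i)
    (hline : lineOf a w = lineOf a' w)
    (hdiv : (a 0 - 1) / w 0 = (a' 0 - 1) / w 0) (hle : a 0 ≤ a' 0) : a = a' := by
  obtain ⟨⟨s, hs⟩, -⟩ := exists_shift hline
  obtain ⟨z, hz⟩ := int_shift hw hc hs
  have hz0 := hz 0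
  have hzpos : 0 ≤ z := by
    by_contra hneg
    push_neg at hneg
    have : z * (w 0 : ℤ) < 0 := mul_neg_of_neg_of_pos hneg (by exact_mod_cast hw)
    omega
  set v : ℕ := z.toNat with hv
  have hzv : z = (v : ℤ) := (Int.toNat_of_nonneg hzpos).symm
  have h0 : a' 0 = a 0 + v * w 0 := by
    rw [hzv] at hz0; exact_mod_cast hz0
  have hdiv2 : (a 0 - 1) / w 0 = (a 0 - 1 + v * w 0) / w 0 := by
    rw [hdiv, show a' 0 - 1 = a 0 - 1 + v * w 0 by have := ha 0; omega]
  rw [Nat.add_mul_div_right _ _ (by omega : 0 < w 0)] at hdiv2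
  have hv0 : v = 0 := by omega
  funext i
  have hi := hz i
  rw [hzv, hv0] at hi
  simpa using (by exact_mod_cast hi : a' i = a i + 0 * w i).symm

lemma fiber_card (Q w : Fin (e+2) → ℕ) (hQ : ∀ i, 1 ≤ Q i)
    (hw : 1 ≤ w 0) (hc : Nat.Coprime (w 0) (w 1)) :
    (Fintype.piFinset (fun i => Finset.Icc 1 (Q i))).card ≤
      ((Q 0 - 1) / (w 0) + 1) *
        ((Fintype.piFinset (fun i => Finset.Icc 1 (Q i))).image (fun a => lineOf a w)).card := by
  classical
  apply Finset.card_le_mul_card_image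
  intro l _
  rw [← Finset.card_range ((Q 0 - 1) / w 0 + 1)]
  apply Finset.card_le_card_of_injOn (fun a => (a 0 - 1) / w 0) (t := Finset.range ((Q 0 - 1) / w 0 + 1))
  · intro a ha
    simp only [Finset.mem_coe, Finset.mem_filter, Fintype.mem_piFinset, Finset.mem_Icc] at ha
    have := (ha.1 0).2
    simp only [Finset.mem_coe, Finset.mem_range]
    have := Nat.div_le_div_right (c := w 0) (by omega : a 0 - 1 ≤ Q 0 - 1)
    omega
  · intro a ha a' ha' hEq
    simp only [Finset.mem_coe, Finset.mem_filter, Fintype.mem_piFinset, Finset.mem_Icc] at ha ha'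
    have hline : lineOf a w = lineOf a' w := by rw [ha.2, ha'.2]
    have h1 : ∀ i, 1 ≤ a i := fun i => (ha.1 i).1
    have h1' : ∀ i, 1 ≤ a' i := fun i => (ha'.1 i).1
    rcases le_total (a 0) (a' 0) with hle | hle
    · exact fiber_eq hw hc h1 h1' hline hEq hle
    · exact (fiber_eq hw hc h1' h1 hline.symm hEq.symm hle).symm


lemma fzo : (0 : Fin (e+2)) ≠ 1 := by
  simp [Fin.ext_iff]

lemma lineThrough_repr {d : ℕ} {l : Set (Fin d → ℝ)} (hl : IsLine l)
    {p r : Fin d → ℝ} (hp : p ∈ l) (hr : r ∈ l) (hne : p ≠ r) :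
    l = {x | ∃ t : ℝ, x = p + t • (r - p)} := by
  obtain ⟨c, v, hv, rfl⟩ := hl
  obtain ⟨s, rfl⟩ := hp
  obtain ⟨u, hu⟩ := hr
  have hsu : s ≠ u := by
    intro h
    apply hne
    rw [hu, h]
  have husz : u - s ≠ 0 := sub_ne_zero.2 (Ne.symm hsu)
  ext x
  constructor
  · rintro ⟨t, rfl⟩
    refine ⟨(t - s)/(u - s), ?_⟩
    rw [hu]
    have : (t - s)/(u - s) * (u - s) = t - s := div_mul_cancel₀ _ husz
    match_scalars
    · ring
    · field_simp
      ring
  · rintro ⟨t, rfl⟩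
    refine ⟨s + t * (u - s), ?_⟩
    rw [hu]
    match_scalars
    · ring
    · ring

lemma richSet_finite (d n k : ℕ) (hk : 2 ≤ k) :
    {l : Set (Fin d → ℝ) | IsLine l ∧ k ≤ (cubeLattice d n ∩ l).ncard}.Finite := by
  apply Set.Finite.subset (Set.Finite.image
    (fun pq : (Fin d → ℝ) × (Fin d → ℝ) => {x | ∃ t : ℝ, x = pq.1 + t • (pq.2 - pq.1)})
    ((cubeLattice_finite d n).prod (cubeLattice_finite d n)))
  rintro l ⟨hline, hcard⟩
  have hfin := (cubeLattice_finite d n).inter_of_left l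
  have h2 : 1 < (cubeLattice d n ∩ l).ncard := lt_of_lt_of_le (by omega) hcard
  obtain ⟨p, hp, r, hr, hne⟩ := (Set.one_lt_ncard hfin).1 h2
  exact ⟨(p, r), ⟨hp.1, hr.1⟩, (lineThrough_repr hline hp.2 hr.2 hne).symm⟩

lemma prod_ite_zero (x y : ℕ) :
    ∏ i : Fin (e+2), (if i = 0 then x else y) = x * y^(e+1) := by
  classical
  rw [← Finset.prod_filter_mul_prod_filter_not Finset.univ (fun i => i = (0 : Fin (e+2)))]
  have h1 : Finset.univ.filter (fun i => i = (0 : Fin (e+2))) = {0} := by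
    ext i; simp
  have h2 : Finset.univ.filter (fun i => ¬ i = (0 : Fin (e+2))) = Finset.univ.erase 0 := by
    ext i; simp [Finset.mem_erase]
  rw [h1, h2]
  rw [Finset.prod_singleton, if_pos rfl]
  congr 1
  rw [Finset.prod_congr rfl (fun i hi => if_neg (Finset.mem_erase.1 hi).1)]
  rw [Finset.prod_const, Finset.card_erase_of_mem (Finset.mem_univ _)]
  simp

lemma prod_ite_pair (y : ℕ) :
    ∏ i : Fin (e+2), (if i = 0 ∨ i = 1 then 1 else y) = y^e := by
  classical
  rw [← Finset.prod_filter_mul_prod_filter_not Finset.univ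
    (fun i => i = (0 : Fin (e+2)) ∨ i = 1)]
  have h1 : ∏ i ∈ Finset.univ.filter (fun i => i = (0 : Fin (e+2)) ∨ i = 1),
      (if i = 0 ∨ i = 1 then 1 else y) = 1 := by
    apply Finset.prod_eq_one
    intro i hi
    rw [if_pos (Finset.mem_filter.1 hi).2]
  rw [h1, one_mul]
  rw [Finset.prod_congr rfl (fun i hi => if_neg (Finset.mem_filter.1 hi).2)]
  rw [Finset.prod_const]
  congr 1
  have h2 : Finset.univ.filter (fun i => ¬ (i = (0 : Fin (e+2)) ∨ i = 1)) =
      Finset.univ \ {0, 1} := by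
    ext i; simp [Finset.mem_sdiff]
  rw [h2, Finset.card_sdiff_of_subset (Finset.subset_univ _)]
  have h3 : ({0, 1} : Finset (Fin (e+2))).card = 2 := by
    rw [Finset.card_insert_of_notMem (by simp [fzo]), Finset.card_singleton]
  simp [h3]


lemma caseB (n k : ℕ) (hn : 2 ≤ n) (hk : 2 ≤ k) (hkn : k ≤ n) :
    n ^ (e+1) ≤
      {l : Set (Fin (e+2) → ℝ) | IsLine l ∧ k ≤ (cubeLattice (e+2) n ∩ l).ncard}.ncard := by
  classical
  set w0 : Fin (e+2) → ℕ := fun i => if i = 0 then 1 else 0 with hw0def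
  set Q : Fin (e+2) → ℕ := fun i => if i = 0 then n - k + 1 else n with hQdef
  have hw00 : w0 0 = 1 := by simp [hw0def]
  have hw01 : w0 1 = 0 := by simp [hw0def, (fzo (e := e)).symm]
  have hcop : Nat.Coprime (w0 0) (w0 1) := by rw [hw00]; exact Nat.coprime_one_left _
  have hQ : ∀ i, 1 ≤ Q i := by
    intro i; simp only [hQdef]; split <;> omega
  set A : Finset (Fin (e+2) → ℕ) := Fintype.piFinset (fun i => Finset.Icc 1 (Q i)) with hA
  set img := A.image (fun a => lineOf a w0) with himg
  have hAcard : A.card = (n - k + 1) * n^(e+1) := by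
    rw [hA, Fintype.card_piFinset]
    have : ∀ i, (Finset.Icc 1 (Q i)).card = Q i := by
      intro i; rw [Nat.card_Icc]; omega
    rw [Finset.prod_congr rfl (fun i _ => this i)]
    rw [hQdef]
    exact prod_ite_zero _ _
  have hfib := fiber_card Q w0 hQ (by omega) hcop
  have hQ0 : Q 0 = n - k + 1 := by simp [hQdef]
  have himgcard : n^(e+1) ≤ img.card := by
    rw [← hA, ← himg, hAcard, hQ0, hw00] at hfib
    simp only [Nat.div_one] at hfib
    have h1 : n - k + 1 - 1 + 1 = n - k + 1 := by omega
    rw [h1] at hfib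
    exact Nat.le_of_mul_le_mul_left (by linarith [hfib]) (by omega : 0 < n - k + 1)
  have hsub : ↑img ⊆
      {l : Set (Fin (e+2) → ℝ) | IsLine l ∧ k ≤ (cubeLattice (e+2) n ∩ l).ncard} := by
    intro l hl
    simp only [himg, Finset.coe_image, Set.mem_image, Finset.mem_coe] at hl
    obtain ⟨a, ha, rfl⟩ := hl
    rw [hA, Fintype.mem_piFinset] at ha
    have ha' : ∀ i, 1 ≤ a i ∧ a i ≤ Q i := by
      intro i; have := ha i; rw [Finset.mem_Icc] at this; exact this
    refine ⟨isLine_lineOf (by omega), ?_⟩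
    apply rich_lineOf (by omega) a w0 Q (by omega) ha'
    intro i
    simp only [hQdef, hw0def]
    by_cases h : i = 0 <;> simp [h] <;> omega
  calc n^(e+1) ≤ img.card := himgcard
    _ = (↑img : Set (Set (Fin (e+2) → ℝ))).ncard := (Set.ncard_coe_finset _).symm
    _ ≤ _ := Set.ncard_le_ncard hsub (richSet_finite _ _ _ hk)


set_option maxHeartbeats 1000000 in
lemma caseA (n k : ℕ) (hn : 2 ≤ n) (hk : 2 ≤ k) (h4 : 4 * k ≤ n) :
    n ^ (2*(e+2)) ≤ 1200 * 16^(e+2) * k^(e+3) *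
      {l : Set (Fin (e+2) → ℝ) | IsLine l ∧ k ≤ (cubeLattice (e+2) n ∩ l).ncard}.ncard := by
  classical
  set T := {l : Set (Fin (e+2) → ℝ) | IsLine l ∧ k ≤ (cubeLattice (e+2) n ∩ l).ncard} with hT
  set q : ℕ := n / 2 with hq
  set m : ℕ := n / (2*k) with hm
  have hm2 : 2 ≤ m := by
    rw [hm]; exact (Nat.le_div_iff_mul_le (by omega)).2 (by omega)
  have hq4 : 4 ≤ q := by
    rw [hq]; exact (Nat.le_div_iff_mul_le (by omega)).2 (by omega)
  have hkm : k * m ≤ q := by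
    rw [hq]
    refine (Nat.le_div_iff_mul_le (by omega)).2 ?_
    have : (2*k) * m ≤ n := by rw [hm]; exact Nat.mul_div_le n (2*k)
    calc k * m * 2 = (2*k)*m := by ring
      _ ≤ n := this
  have hmq : m ≤ q := by
    rw [hm, hq]
    exact Nat.div_le_div_left (by omega) (by omega)
  have h2q : 2 * q ≤ n := by rw [hq]; omega
  have hn4km : n ≤ 4 * k * m := by
    have h2 : n < (m+1) * (2*k) := by
      refine (Nat.div_lt_iff_lt_mul (by omega : 0 < 2*k)).1 ?_
      rw [hm]
      exact Nat.lt_succ_self _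
    have h3 : (m+1) * (2*k) ≤ (2*m) * (2*k) := Nat.mul_le_mul_right _ (by omega)
    have h4' : (2*m) * (2*k) = 4 * k * m := by ring
    omega
  have hn4q : n ≤ 4 * q := by
    have h1 : n < (q+1) * 2 := by
      refine (Nat.div_lt_iff_lt_mul (by omega : 0 < 2)).1 ?_
      rw [hq]
      exact Nat.lt_succ_self _
    omega
  set W : Finset (Fin (e+2) → ℕ) :=
    (Fintype.piFinset (fun _ : Fin (e+2) => Finset.Icc 1 m)).filter
      (fun w => Nat.Coprime (w 0) (w 1)) with hW
  set Q : Fin (e+2) → ℕ := fun _ => q with hQdef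
  set A : Finset (Fin (e+2) → ℕ) := Fintype.piFinset (fun i => Finset.Icc 1 (Q i)) with hA
  have hQ : ∀ i, 1 ≤ Q i := fun i => by simp [hQdef]; omega
  have hWmem : ∀ w ∈ W, (∀ i, 1 ≤ w i ∧ w i ≤ m) ∧ Nat.Coprime (w 0) (w 1) := by
    intro w hw
    rw [hW, Finset.mem_filter, Fintype.mem_piFinset] at hw
    exact ⟨fun i => by have := hw.1 i; rwa [Finset.mem_Icc] at this, hw.2⟩
  have hAcard : A.card = q^(e+2) := by
    rw [hA, Fintype.card_piFinset]
    have : ∀ i, (Finset.Icc 1 (Q i)).card = q := by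
      intro i; rw [Nat.card_Icc]; simp [hQdef]
    rw [Finset.prod_congr rfl (fun i _ => this i), Finset.prod_const]
    simp
  -- richness: every line from the construction is in T
  have hsub : ∀ w ∈ W, ↑(A.image (fun a => lineOf a w)) ⊆ T := by
    intro w hw l hl
    simp only [Finset.coe_image, Set.mem_image, Finset.mem_coe] at hl
    obtain ⟨a, ha, rfl⟩ := hl
    rw [hA, Fintype.mem_piFinset] at ha
    have ha' : ∀ i, 1 ≤ a i ∧ a i ≤ Q i := by
      intro i; have := ha i; rwa [Finset.mem_Icc] at this
    obtain ⟨hwb, hwc⟩ := hWmem w hw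
    refine ⟨isLine_lineOf (hwb 0).1, ?_⟩
    apply rich_lineOf (by omega) a w Q (hwb 0).1 ha'
    intro i
    have h1 : (k-1) * w i ≤ k * m := Nat.mul_le_mul (by omega) (hwb i).2
    simp only [hQdef]
    omega
  -- per direction counting
  have hper : ∀ w ∈ W, q^(e+1) * w 0 ≤ 2 * (A.image (fun a => lineOf a w)).card := by
    intro w hw
    obtain ⟨hwb, hwc⟩ := hWmem w hw
    have hfib := fiber_card Q w hQ (hwb 0).1 hwc
    rw [hAcard] at hfib
    set I := (A.image (fun a => lineOf a w)).card with hI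
    set B := (Q 0 - 1) / w 0 + 1 with hB
    have h5 : B * w 0 ≤ 2 * q := by
      have h51 : ((Q 0 - 1) / w 0) * w 0 ≤ Q 0 - 1 := Nat.div_mul_le_self _ _
      have h52 : w 0 ≤ q := le_trans (hwb 0).2 hmq
      have h53 : Q 0 = q := rfl
      rw [hB, add_mul, one_mul]
      omega
    have h6 : q^(e+2) * w 0 ≤ (B * w 0) * I := by
      calc q^(e+2) * w 0 ≤ (B * I) * w 0 := Nat.mul_le_mul_right _ hfib
        _ = (B * w 0) * I := by ring
    have h7 : q^(e+2) * w 0 ≤ (2 * q) * I := le_trans h6 (Nat.mul_le_mul_right _ h5)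
    have h8 : q * (q^(e+1) * w 0) ≤ q * (2 * I) := by
      calc q * (q^(e+1) * w 0) = q^(e+2) * w 0 := by ring
        _ ≤ (2*q) * I := h7
        _ = q * (2 * I) := by ring
    exact Nat.le_of_mul_le_mul_left h8 (by omega)
  -- disjointness of images
  have hdisj : ∀ w ∈ W, ∀ w' ∈ W, w ≠ w' →
      Disjoint (A.image (fun a => lineOf a w)) (A.image (fun a => lineOf a w')) := by
    intro w hw w' hw' hne
    rw [Finset.disjoint_left]
    intro l hl hl'
    simp only [Finset.mem_image] at hl hl'
    obtain ⟨a, _, hla⟩ := hl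
    obtain ⟨a', _, hla'⟩ := hl'
    obtain ⟨hwb, hwc⟩ := hWmem w hw
    obtain ⟨hwb', hwc'⟩ := hWmem w' hw'
    have heq : lineOf a w = lineOf a' w' := by rw [hla, hla']
    obtain ⟨-, t, ht⟩ := exists_shift heq
    exact hne (dir_eq (hwb 0).1 (hwb' 0).1 hwc hwc' ht).symm
  set F := W.biUnion (fun w => A.image (fun a => lineOf a w)) with hF
  have hFcard : F.card = ∑ w ∈ W, (A.image (fun a => lineOf a w)).card :=
    Finset.card_biUnion hdisj
  have hsum : q^(e+1) * (∑ w ∈ W, w 0) ≤ 2 * F.card := by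
    rw [hFcard, Finset.mul_sum, Finset.mul_sum]
    exact Finset.sum_le_sum hper
  -- lower bound for the direction sum via the 2-dimensional coprime sum
  have hSW : S2 m * m^e ≤ ∑ w ∈ W, w 0 := by
    set P2 := ((Finset.Icc 1 m) ×ˢ (Finset.Icc 1 m)).filter
      (fun p : ℕ × ℕ => Nat.Coprime p.1 p.2) with hP2
    set R : Finset (Fin (e+2) → ℕ) := Fintype.piFinset
      (fun i : Fin (e+2) => if i = 0 ∨ i = 1 then {1} else Finset.Icc 1 m) with hR
    set gm : (ℕ × ℕ) × (Fin (e+2) → ℕ) → (Fin (e+2) → ℕ) :=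
      fun x => fun i => if i = 0 then x.1.1 else if i = 1 then x.1.2 else x.2 i with hgm
    have hRcard : R.card = m^e := by
      rw [hR, Fintype.card_piFinset]
      have : ∀ i : Fin (e+2), ((if i = 0 ∨ i = 1 then ({1} : Finset ℕ)
          else Finset.Icc 1 m)).card = (if i = 0 ∨ i = 1 then 1 else m) := by
        intro i; split <;> simp [Nat.card_Icc]
      rw [Finset.prod_congr rfl (fun i _ => this i)]
      exact prod_ite_pair m
    have hmaps : ∀ x ∈ P2 ×ˢ R, gm x ∈ W := by
      rintro ⟨⟨u, v⟩, r⟩ hx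
      rw [Finset.mem_product] at hx
      obtain ⟨hp, hr⟩ := hx
      rw [hP2, Finset.mem_filter, Finset.mem_product] at hp
      rw [hR, Fintype.mem_piFinset] at hr
      rw [hW, Finset.mem_filter, Fintype.mem_piFinset]
      constructor
      · intro i
        by_cases h0 : i = 0
        · simpa [hgm, h0] using hp.1.1
        · by_cases h1 : i = 1
          · simpa [hgm, h0, h1] using hp.1.2
          · have := hr i
            rw [if_neg (by tauto)] at this
            simpa [hgm, h0, h1] using this
      · have hg0 : gm ((u,v),r) 0 = u := by simp [hgm]
        have hg1 : gm ((u,v),r) 1 = v := by simp [hgm, (fzo (e := e)).symm]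
        rw [hg0, hg1]
        exact hp.2
    have hinj : Set.InjOn gm ↑(P2 ×ˢ R) := by
      rintro ⟨⟨u, v⟩, r⟩ hx ⟨⟨u', v'⟩, r'⟩ hx' hEq
      rw [Finset.mem_coe, Finset.mem_product] at hx hx'
      have hu : u = u' := by
        have := congrFun hEq 0; simpa [hgm] using this
      have hv : v = v' := by
        have := congrFun hEq 1; simpa [hgm, (fzo (e := e)).symm] using this
      have hrr : r = r' := by
        funext i
        by_cases h0 : i = 0
        · have hr1 := hx.2; have hr2 := hx'.2
          rw [hR, Fintype.mem_piFinset] at hr1 hr2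
          have e1 := hr1 i; have e2 := hr2 i
          rw [if_pos (by tauto)] at e1 e2
          simp only [Finset.mem_singleton] at e1 e2
          rw [e1, e2]
        · by_cases h1 : i = 1
          · have hr1 := hx.2; have hr2 := hx'.2
            rw [hR, Fintype.mem_piFinset] at hr1 hr2
            have e1 := hr1 i; have e2 := hr2 i
            rw [if_pos (by tauto)] at e1 e2
            simp only [Finset.mem_singleton] at e1 e2
            rw [e1, e2]
          · have := congrFun hEq i
            simpa [hgm, h0, h1] using this
      simp [hu, hv, hrr]
    have himgsub : (P2 ×ˢ R).image gm ⊆ W := by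
      intro w hw
      rw [Finset.mem_image] at hw
      obtain ⟨x, hx, rfl⟩ := hw
      exact hmaps x hx
    have hS2 : S2 m = ∑ p ∈ P2, p.1 := by rw [hP2]; rfl
    have hstep1 : S2 m * m^e = ∑ p ∈ P2, p.1 * R.card := by
      rw [hS2, ← hRcard]
      exact Finset.sum_mul _ _ _
    calc S2 m * m^e = ∑ p ∈ P2, p.1 * R.card := hstep1
      _ = ∑ x ∈ P2 ×ˢ R, x.1.1 := by
        rw [Finset.sum_product]
        simp [Finset.sum_const, mul_comm]
      _ = ∑ x ∈ P2 ×ˢ R, (gm x) 0 := by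
        apply Finset.sum_congr rfl
        intro x _
        simp [hgm]
      _ = ∑ w ∈ (P2 ×ˢ R).image gm, w 0 := (Finset.sum_image (f := fun w => w 0)
          (fun a ha b hb h => hinj (Finset.mem_coe.2 ha) (Finset.mem_coe.2 hb) h)).symm
      _ ≤ ∑ w ∈ W, w 0 := Finset.sum_le_sum_of_subset himgsub
  -- combine counting
  have hm3 : m^3 ≤ 600 * S2 m := by exact_mod_cast coprime_weight_sum m
  have hkey : m^(e+3) * q^(e+1) ≤ 1200 * F.card := by
    have h1 : m^(e+3) ≤ 600 * (S2 m * m^e) := by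
      calc m^(e+3) = m^3 * m^e := by ring
        _ ≤ (600 * S2 m) * m^e := Nat.mul_le_mul_right _ hm3
        _ = 600 * (S2 m * m^e) := by ring
    calc m^(e+3) * q^(e+1) ≤ (600 * (S2 m * m^e)) * q^(e+1) := Nat.mul_le_mul_right _ h1
      _ ≤ (600 * (∑ w ∈ W, w 0)) * q^(e+1) := by
          have := Nat.mul_le_mul_left 600 hSW
          exact Nat.mul_le_mul_right _ this
      _ = 600 * (q^(e+1) * (∑ w ∈ W, w 0)) := by ring
      _ ≤ 600 * (2 * F.card) := Nat.mul_le_mul_left _ hsum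
      _ = 1200 * F.card := by ring
  -- final chain
  have hFT : F.card ≤ T.ncard := by
    have : ↑F ⊆ T := by
      intro l hl
      rw [hF, Finset.coe_biUnion] at hl
      simp only [Set.mem_iUnion, Finset.mem_coe] at hl
      obtain ⟨w, hw, hlw⟩ := hl
      exact hsub w hw hlw
    calc F.card = (↑F : Set (Set (Fin (e+2) → ℝ))).ncard := (Set.ncard_coe_finset _).symm
      _ ≤ T.ncard := Set.ncard_le_ncard this (richSet_finite _ _ _ hk)
  calc n ^ (2*(e+2)) = n^(e+3) * n^(e+1) := by ring
    _ ≤ (4*k*m)^(e+3) * (4*q)^(e+1) :=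
        Nat.mul_le_mul (Nat.pow_le_pow_left hn4km _) (Nat.pow_le_pow_left hn4q _)
    _ = 4^(e+3) * 4^(e+1) * k^(e+3) * (m^(e+3) * q^(e+1)) := by
        rw [mul_pow, mul_pow, mul_pow]; ring
    _ = 16^(e+2) * k^(e+3) * (m^(e+3) * q^(e+1)) := by
        have : (4:ℕ)^(e+3) * 4^(e+1) = 16^(e+2) := by
          rw [← pow_add]
          have h1 : e+3+(e+1) = 2*(e+2) := by ring
          rw [h1, pow_mul]
          norm_num
        rw [this]
    _ ≤ 16^(e+2) * k^(e+3) * (1200 * F.card) := Nat.mul_le_mul_left _ hkey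
    _ ≤ 16^(e+2) * k^(e+3) * (1200 * T.ncard) := by
        have := Nat.mul_le_mul_left 1200 hFT
        exact Nat.mul_le_mul_left _ this
    _ = 1200 * 16^(e+2) * k^(e+3) * T.ncard := by ring

end RichAux

/-- For every `d ≥ 2` there is a constant `c_d > 0` such that for every `n ≥ 2` and
`2 ≤ k ≤ n`, the number of `k`-rich lines with respect to the cube lattice
`{1, …, n}^d ⊂ ℝ^d` is at least `c_d * n^(2d) / k^(d+1)`. -/
theorem cube_lattice_rich_lines_lower_bound_dim (d : ℕ) (hd : 2 ≤ d) :
    ∃ c : ℝ, 0 < c ∧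
      ∀ n k : ℕ, 2 ≤ n → 2 ≤ k → k ≤ n →
        c * (n : ℝ) ^ (2 * d) / (k : ℝ) ^ (d + 1) ≤
          ((Set.ncard {l : Set (Fin d → ℝ) |
              IsLine l ∧ k ≤ Set.ncard (cubeLattice d n ∩ l)}) : ℝ) := by
  obtain ⟨e, rfl⟩ : ∃ e, d = e + 2 := ⟨d - 2, by omega⟩
  refine ⟨((1200 * 16 ^ (e+2) : ℝ))⁻¹, by positivity, ?_⟩
  intro n k hn hk hkn
  set T := {l : Set (Fin (e+2) → ℝ) |
      IsLine l ∧ k ≤ Set.ncard (cubeLattice (e+2) n ∩ l)} with hT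
  have key : n ^ (2*(e+2)) ≤ 1200 * 16^(e+2) * k^(e+3) * T.ncard := by
    rcases le_or_gt (4*k) n with h4 | h4
    · exact RichAux.caseA n k hn hk h4
    · have hB := RichAux.caseB (e := e) n k hn hk hkn
      have hn4k : n ≤ 4*k := by omega
      calc n ^ (2*(e+2)) = n^(e+3) * n^(e+1) := by ring
        _ ≤ (4*k)^(e+3) * n^(e+1) := Nat.mul_le_mul_right _ (Nat.pow_le_pow_left hn4k _)
        _ = 4^(e+3) * k^(e+3) * n^(e+1) := by rw [mul_pow]
        _ ≤ (1200 * 16^(e+2)) * k^(e+3) * n^(e+1) := by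
            have h44 : (4:ℕ)^(e+3) ≤ 1200 * 16^(e+2) := by
              calc (4:ℕ)^(e+3) = 4 * 4^(e+2) := by ring
                _ ≤ 4 * 16^(e+2) :=
                    Nat.mul_le_mul_left _ (Nat.pow_le_pow_left (by norm_num) _)
                _ ≤ 1200 * 16^(e+2) := Nat.mul_le_mul_right _ (by norm_num)
            exact Nat.mul_le_mul_right _ (Nat.mul_le_mul_right _ h44)
        _ ≤ (1200 * 16^(e+2)) * k^(e+3) * T.ncard := Nat.mul_le_mul_left _ hB
        _ = 1200 * 16^(e+2) * k^(e+3) * T.ncard := by ring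
  have keyR : (n:ℝ) ^ (2*(e+2)) ≤ (1200 * 16^(e+2) : ℝ) * ((k:ℝ)^(e+3) * (T.ncard : ℝ)) := by
    have := key
    have h := (Nat.cast_le (α := ℝ)).2 key
    push_cast at h
    calc (n:ℝ) ^ (2*(e+2)) ≤ 1200 * 16^(e+2) * (k:ℝ)^(e+3) * (T.ncard : ℝ) := h
      _ = (1200 * 16^(e+2) : ℝ) * ((k:ℝ)^(e+3) * (T.ncard : ℝ)) := by ring
  have hkpos : (0:ℝ) < (k:ℝ)^(e+2+1) := by positivity
  have hcpos : (0:ℝ) < (1200 * 16^(e+2) : ℝ) := by positivity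
  rw [div_le_iff₀ hkpos]
  have hexp : (k:ℝ)^(e+2+1) = (k:ℝ)^(e+3) := by norm_num
  rw [hexp]
  calc (1200 * 16 ^ (e+2) : ℝ)⁻¹ * (n:ℝ)^(2*(e+2))
      ≤ (1200 * 16 ^ (e+2) : ℝ)⁻¹ *
        ((1200 * 16^(e+2) : ℝ) * ((k:ℝ)^(e+3) * (T.ncard : ℝ))) :=
        mul_le_mul_of_nonneg_left keyR (by positivity)
    _ = (T.ncard : ℝ) * (k:ℝ)^(e+3) := by
        rw [← mul_assoc, inv_mul_cancel₀ (ne_of_gt hcpos), one_mul]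
        ring
end
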